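/- arXiv:2505.06952 — 5 statements merged into one kernel-verified Lean document; each statement's English description precedes it below -/
import Mathlib

section
/- Fix γ > 0. There exists a constant C > 0 such that for every φ ∈ H^{3/4}[0,1] and every v ∈ {0,1}: ∫₀^∞ Φ_v(ϱ;φ)² dϱ ≤ C·Σ_{ℓ≥1}(πℓ)^{3/2} φ̂_c(ℓ)², where Φ_v(ϱ;φ) := Σ_{ℓ≥1} c_ℓ(v)·φ̂_c(ℓ)·(πℓ)²/((πℓ)² + γ²ϱ⁴). -/
open MeasureTheory Real Filter
open scoped ContDiff ENNReal

noncomputable section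

/-- Lebesgue measure restricted to `[0,1]`. -/
def μ01 : Measure ℝ := volume.restrict (Set.Icc (0:ℝ) 1)

/-- The cosine orthonormal system `c_ℓ` on `[0,1]`:
`c_0 ≡ 1`, `c_ℓ(u) = √2 cos(πℓu)` for `ℓ ≥ 1`. -/
def cosB (ℓ : ℕ) (u : ℝ) : ℝ :=
  if ℓ = 0 then 1 else Real.sqrt 2 * Real.cos (Real.pi * ℓ * u)

/-- The cosine coefficients `φ̂_c(ℓ) = ∫₀¹ φ(u) c_ℓ(u) du`. -/
def cosCoeff (φ : ℝ → ℝ) (ℓ : ℕ) : ℝ := ∫ u in Set.Icc (0:ℝ) 1, φ u * cosB ℓ u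

/-- The kernel `V_ϱ(u,v) = ϱ ∑_{n ≥ 0} c_n(u) c_n(v) / (ϱ + (nπ)²)`. -/
def Vker (ϱ u v : ℝ) : ℝ := ϱ * ∑' n : ℕ, cosB n u * cosB n v / (ϱ + ((n : ℝ) * Real.pi) ^ 2)

/-- The boundary pairing `∫₀¹ V_ϱ(u,v) (Tv − T(s,u)) du`. -/
def bTerm (T : ℝ → ℝ → ℝ) (Tv v s ϱ : ℝ) : ℝ :=
  ∫ u in Set.Icc (0:ℝ) 1, Vker ϱ u v * (Tv - T s u)

/-- A weak solution of the fractional heat equation with thermostatted boundary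
with data `(cbulk, cbd, T0, T1, Tini)`. -/
structure IsWeakSolution (cbulk cbd T0 T1 : ℝ) (Tini : ℝ → ℝ) (T : ℝ → ℝ → ℝ) : Prop where
  /-- `T(t) ∈ L²[0,1]` for every `t ≥ 0`. -/
  memL2 : ∀ t : ℝ, 0 ≤ t → MemLp (T t) 2 μ01
  /-- (i) continuity of `T` into `L²[0,1]` with the weak topology. -/
  weakCont : ∀ g : ℝ → ℝ, MemLp g 2 μ01 →
    ContinuousOn (fun t => ∫ u in Set.Icc (0:ℝ) 1, T t u * g u) (Set.Ici (0:ℝ))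
  /-- (ii) the boundary terms are square integrable against `ϱ^{-3/4} dϱ ds`. -/
  bdryFinite : ∀ v Tv : ℝ, ((v = 0 ∧ Tv = T0) ∨ (v = 1 ∧ Tv = T1)) → ∀ t : ℝ, 0 < t →
    (∫⁻ s in Set.Ioc (0:ℝ) t, ∫⁻ ϱ in Set.Ioi (0:ℝ),
        ENNReal.ofReal ((bTerm T Tv v s ϱ) ^ 2 * ϱ ^ (-(3:ℝ)/4))) < ⊤
  /-- (iii) the weak form of the equation, against smooth test functions
  compactly supported in `(0,1)`. -/
  weakEq : ∀ φ : ℝ → ℝ, ContDiff ℝ ∞ φ → tsupport φ ⊆ Set.Ioo (0:ℝ) 1 → ∀ t : ℝ, 0 ≤ t →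
    (∫ u in Set.Icc (0:ℝ) 1, φ u * T t u) - (∫ u in Set.Icc (0:ℝ) 1, φ u * Tini u)
      = (-cbulk) * (∫ s in Set.Ioc (0:ℝ) t,
            ∑' ℓ : ℕ, (Real.pi * ((ℓ : ℝ) + 1)) ^ ((3:ℝ)/2)
              * cosCoeff φ (ℓ + 1) * cosCoeff (T s) (ℓ + 1))
        + cbd * ((∫ s in Set.Ioc (0:ℝ) t, ∫ ϱ in Set.Ioi (0:ℝ),
              (∫ u in Set.Icc (0:ℝ) 1, Vker ϱ u 0 * φ u) * bTerm T T0 0 s ϱ * ϱ ^ (-(3:ℝ)/4))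
          + (∫ s in Set.Ioc (0:ℝ) t, ∫ ϱ in Set.Ioi (0:ℝ),
              (∫ u in Set.Icc (0:ℝ) 1, Vker ϱ u 1 * φ u) * bTerm T T1 1 s ϱ * ϱ ^ (-(3:ℝ)/4)))

/-- The squared Sobolev seminorm `‖f‖²_{α,0} = ∑_{ℓ≥1} (πℓ)^{2α} f̂_c(ℓ)²`. -/
def seminormSq (α : ℝ) (f : ℝ → ℝ) : ℝ :=
  ∑' ℓ : ℕ, (Real.pi * ((ℓ : ℝ) + 1)) ^ (2 * α) * (cosCoeff f (ℓ + 1)) ^ 2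

/-- Membership in the Sobolev space `H^α[0,1]`. -/
def MemH (α : ℝ) (f : ℝ → ℝ) : Prop :=
  MemLp f 2 μ01 ∧
    Summable (fun ℓ : ℕ => (Real.pi * ((ℓ : ℝ) + 1)) ^ (2 * α) * (cosCoeff f (ℓ + 1)) ^ 2)

/-- The Sobolev norm `‖f‖_α = (‖f‖²_{L²} + ‖f‖²_{α,0})^{1/2}`. -/
def hnorm (α : ℝ) (f : ℝ → ℝ) : ℝ :=
  Real.sqrt (((eLpNorm f 2 μ01).toReal) ^ 2 + seminormSq α f)

/-- Membership in `H₀^α[0,1]`: the closure, in the `‖·‖_α` norm, of the set of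
`C^∞` functions compactly supported in `(0,1)`. -/
def MemH0 (α : ℝ) (f : ℝ → ℝ) : Prop :=
  MemH α f ∧ ∃ g : ℕ → ℝ → ℝ,
    (∀ k, ContDiff ℝ ∞ (g k) ∧ tsupport (g k) ⊆ Set.Ioo (0:ℝ) 1) ∧
    Tendsto (fun k => hnorm α (fun u => g k u - f u)) atTop (nhds 0)

/-- The value at `v` of the continuous representative of `f`, given by the
cosine series `∑_{ℓ≥0} f̂_c(ℓ) c_ℓ(v)`. -/
def reprVal (f : ℝ → ℝ) (v : ℝ) : ℝ := ∑' ℓ : ℕ, cosCoeff f ℓ * cosB ℓ v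




private lemma quarter_pow {x : ℝ} (hx : 0 ≤ x) (n : ℕ) :
    x ^ ((n : ℝ)/4) = (x ^ ((1:ℝ)/4)) ^ n := by
  rw [show ((n:ℝ)/4) = (1:ℝ)/4 * (n:ℝ) by ring, Real.rpow_mul hx, Real.rpow_natCast]

/-- Cauchy–Schwarz for tsums over ℕ. -/
private lemma cs_tsum {f g : ℕ → ℝ} (hf : Summable fun i => f i ^ 2)
    (hg : Summable fun i => g i ^ 2) :
    (∑' i, f i * g i) ^ 2 ≤ (∑' i, f i ^ 2) * (∑' i, g i ^ 2) := by
  have habs : Summable fun i => |f i * g i| := by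
    apply Summable.of_nonneg_of_le (fun i => abs_nonneg _) (fun i => ?_)
      ((hf.add hg).mul_left (1/2))
    rw [abs_mul]
    nlinarith [sq_nonneg (|f i| - |g i|), sq_abs (f i), sq_abs (g i),
      abs_nonneg (f i), abs_nonneg (g i)]
  have hRHS : 0 ≤ (∑' i, f i ^ 2) * (∑' i, g i ^ 2) :=
    mul_nonneg (tsum_nonneg fun i => sq_nonneg _) (tsum_nonneg fun i => sq_nonneg _)
  have h2 : (∑' i, |f i * g i|) ≤ Real.sqrt ((∑' i, f i ^ 2) * (∑' i, g i ^ 2)) := by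
    apply Summable.tsum_le_of_sum_le habs
    intro s
    have cs := Finset.sum_mul_sq_le_sq_mul_sq s (fun i => |f i|) (fun i => |g i|)
    simp only [sq_abs] at cs
    have e : ∀ i ∈ s, |f i * g i| = |f i| * |g i| := fun i _ => abs_mul _ _
    rw [Finset.sum_congr rfl e]
    have hnn : 0 ≤ ∑ i ∈ s, |f i| * |g i| :=
      Finset.sum_nonneg fun i _ => mul_nonneg (abs_nonneg _) (abs_nonneg _)
    have hdd : (∑ i ∈ s, |f i| * |g i|) ^ 2 ≤ (∑' i, f i ^ 2) * (∑' i, g i ^ 2) := by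
      calc (∑ i ∈ s, |f i| * |g i|) ^ 2 ≤ (∑ i ∈ s, f i ^ 2) * (∑ i ∈ s, g i ^ 2) := cs
        _ ≤ (∑' i, f i ^ 2) * (∑' i, g i ^ 2) :=
          mul_le_mul (Summable.sum_le_tsum s (fun i _ => sq_nonneg _) hf)
            (Summable.sum_le_tsum s (fun i _ => sq_nonneg _) hg)
            (Finset.sum_nonneg fun i _ => sq_nonneg _) (tsum_nonneg fun i => sq_nonneg _)
    calc (∑ i ∈ s, |f i| * |g i|) = Real.sqrt ((∑ i ∈ s, |f i| * |g i|) ^ 2) :=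
          (Real.sqrt_sq hnn).symm
      _ ≤ Real.sqrt ((∑' i, f i ^ 2) * (∑' i, g i ^ 2)) := Real.sqrt_le_sqrt hdd
  have h1 : |∑' i, f i * g i| ≤ ∑' i, |f i * g i| := by
    have := norm_tsum_le_tsum_norm (f := fun i => f i * g i)
      (by simpa only [Real.norm_eq_abs] using habs)
    simpa only [Real.norm_eq_abs] using this
  calc (∑' i, f i * g i) ^ 2 = |∑' i, f i * g i| ^ 2 := (sq_abs _).symm
    _ ≤ (Real.sqrt ((∑' i, f i ^ 2) * (∑' i, g i ^ 2))) ^ 2 :=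
        pow_le_pow_left₀ (abs_nonneg _) (h1.trans h2) 2
    _ = (∑' i, f i ^ 2) * (∑' i, g i ^ 2) := Real.sq_sqrt hRHS

private lemma key_y {y : ℝ} (hy : 1 ≤ y) :
    y ^ (-(5:ℝ)/4) ≤ 16 * (y ^ (-(1:ℝ)/4) - (y+1) ^ (-(1:ℝ)/4)) := by
  have hy0 : (0:ℝ) ≤ y := by linarith
  have hy10 : (0:ℝ) ≤ y + 1 := by linarith
  set b := y ^ ((1:ℝ)/4) with hbdef
  set a := (y+1) ^ ((1:ℝ)/4) with hadef
  have hb4 : b ^ 4 = y := by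
    rw [hbdef, ← Real.rpow_natCast (y ^ ((1:ℝ)/4)) 4, ← Real.rpow_mul hy0]; norm_num
  have ha4 : a ^ 4 = y + 1 := by
    rw [hadef, ← Real.rpow_natCast ((y+1) ^ ((1:ℝ)/4)) 4, ← Real.rpow_mul hy10]; norm_num
  have hb1 : 1 ≤ b := by
    by_contra h
    push_neg at h
    have hbnn : 0 ≤ b := Real.rpow_nonneg hy0 _
    have : b ^ 4 < 1 := pow_lt_one₀ hbnn h (by norm_num)
    rw [hb4] at this; linarith
  have hab : b ≤ a := by
    rw [hbdef, hadef]
    exact Real.rpow_le_rpow hy0 (by linarith) (by norm_num)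
  have hbpos : 0 < b := by linarith
  have hapos : 0 < a := lt_of_lt_of_le hbpos hab
  have e1 : y ^ (-(5:ℝ)/4) = (b ^ 5)⁻¹ := by
    rw [show (-(5:ℝ)/4) = -(((5:ℕ):ℝ)/4) by norm_num, Real.rpow_neg hy0,
      quarter_pow hy0 5]
  have e2 : y ^ (-(1:ℝ)/4) = b⁻¹ := by
    rw [show (-(1:ℝ)/4) = -((1:ℝ)/4) by norm_num, Real.rpow_neg hy0, hbdef]
  have e3 : (y+1) ^ (-(1:ℝ)/4) = a⁻¹ := by
    rw [show (-(1:ℝ)/4) = -((1:ℝ)/4) by norm_num, Real.rpow_neg hy10, hadef]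
  rw [e1, e2, e3]
  have hb2a2 : b^2 ≤ a^2 := by nlinarith
  have hb3a3 : b^3 ≤ a^3 := by nlinarith
  have hQ : a^3 + a^2*b + a*b^2 + b^3 ≤ 4 * a^3 := by nlinarith
  have hd : (a - b) * (a^3 + a^2*b + a*b^2 + b^3) = 1 := by
    linear_combination ha4 - hb4
  have habnn : 0 ≤ a - b := by linarith
  have h15 : 1 ≤ (a - b) * (4 * a^3) := by nlinarith [mul_le_mul_of_nonneg_left hQ habnn]
  have h4 : a^4 ≤ 4 * b^4 := by rw [ha4, hb4]; linarith
  have hgoal : (a * b) * a^3 ≤ (16 * (a - b) * b^5) * a^3 := by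
    nlinarith [mul_le_mul_of_nonneg_left h15 (by positivity : (0:ℝ) ≤ 4*b^5),
      mul_le_mul_of_nonneg_right h4 hbpos.le]
  have hmul : a * b ≤ 16 * (a - b) * b^5 :=
    le_of_mul_le_mul_right hgoal (pow_pos hapos 3)
  have hinv : b⁻¹ - a⁻¹ = (a - b)/(a*b) := by
    field_simp
  rw [hinv, mul_div_assoc', inv_eq_one_div, div_le_div_iff₀ (by positivity) (by positivity)]
  nlinarith [hmul]

private lemma tele {c : ℝ} (hc : 1 ≤ c) :
    (∑' j : ℕ, ((j:ℝ) + c) ^ (-(5:ℝ)/4)) ≤ 16 * c ^ (-(1:ℝ)/4) := by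
  have hc0 : (0:ℝ) < c := by linarith
  apply Real.tsum_le_of_sum_range_le
    (fun n => Real.rpow_nonneg (by have := Nat.cast_nonneg (α := ℝ) n; linarith) _)
  intro n
  have step : ∀ j ∈ Finset.range n, ((j:ℝ) + c) ^ (-(5:ℝ)/4)
      ≤ 16 * (((j:ℝ) + c) ^ (-(1:ℝ)/4) - (((j:ℝ) + 1 + c) ^ (-(1:ℝ)/4))) := by
    intro j _
    have h := key_y (y := (j:ℝ) + c) (by have := Nat.cast_nonneg (α := ℝ) j; linarith)
    have : (j:ℝ) + c + 1 = (j:ℝ) + 1 + c := by ring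
    rwa [this] at h
  calc ∑ j ∈ Finset.range n, ((j:ℝ) + c) ^ (-(5:ℝ)/4)
      ≤ ∑ j ∈ Finset.range n,
          16 * (((j:ℝ) + c) ^ (-(1:ℝ)/4) - (((j:ℝ) + 1 + c) ^ (-(1:ℝ)/4))) :=
        Finset.sum_le_sum step
    _ = 16 * ∑ j ∈ Finset.range n,
          ((((j:ℕ):ℝ) + c) ^ (-(1:ℝ)/4) - ((((j+1:ℕ)):ℝ) + c) ^ (-(1:ℝ)/4)) := by
        rw [Finset.mul_sum]
        congr 1 with j
        push_cast
        ring_nf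
    _ = 16 * ((((0:ℕ):ℝ) + c) ^ (-(1:ℝ)/4) - (((n:ℕ):ℝ) + c) ^ (-(1:ℝ)/4)) := by
        rw [Finset.sum_range_sub' (fun j => (((j:ℕ):ℝ) + c) ^ (-(1:ℝ)/4)) n]
    _ ≤ 16 * c ^ (-(1:ℝ)/4) := by
        have h1 : (0:ℝ) ≤ (((n:ℕ):ℝ) + c) ^ (-(1:ℝ)/4) :=
          Real.rpow_nonneg (by have := Nat.cast_nonneg (α := ℝ) n; linarith) _
        have h2 : (((0:ℕ):ℝ) + c) = c := by norm_num
        rw [h2]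
        nlinarith [h1]




private lemma poly1 {w : ℝ} (hw : 0 ≤ w) : 1 + w^2 ≤ 2*(1+w^8)^2 := by
  have h8 : (0:ℝ) ≤ w^8 := by positivity
  have h16 : (0:ℝ) ≤ w^16 := by positivity
  rcases le_or_gt w 1 with h | h
  · have h2 : w^2 ≤ 1 := by nlinarith [mul_nonneg (sub_nonneg.2 h) (by linarith : (0:ℝ) ≤ 1 + w)]
    nlinarith
  · have h21 : 1 ≤ w^2 := by nlinarith
    have h6 : 0 ≤ w^6 - 1 := by
      nlinarith [mul_nonneg (sub_nonneg.2 h21) (by positivity : (0:ℝ) ≤ w^4 + w^2 + 1)]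
    have h2 : w^2 ≤ w^8 := by nlinarith [mul_nonneg (sq_nonneg w) h6]
    nlinarith

private lemma poly2 {w : ℝ} (hw : 0 ≤ w) : (1 + w^2)*w^5 ≤ 2*(1+w^8)^2 := by
  have h8 : (0:ℝ) ≤ w^8 := by positivity
  have h16 : (0:ℝ) ≤ w^16 := by positivity
  rcases le_or_gt w 1 with h | h
  · have h5 : w^5 ≤ 1 := by
      nlinarith [mul_nonneg (sub_nonneg.2 h) (by positivity : (0:ℝ) ≤ w^4 + w^3 + w^2 + w + 1)]
    have h2 : w^2 ≤ 1 := by nlinarith [mul_nonneg (sub_nonneg.2 h) (by linarith : (0:ℝ) ≤ 1 + w)]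
    have key : (1 + w^2)*w^5 ≤ 2*1 :=
      mul_le_mul (by linarith) h5 (by positivity) (by norm_num)
    nlinarith
  · have h78 : w^7 ≤ w^8 := by
      nlinarith [mul_nonneg (by positivity : (0:ℝ) ≤ w^7) (sub_nonneg.2 h.le)]
    have h3 : 0 ≤ w^3 - 1 := by
      nlinarith [mul_nonneg (sub_nonneg.2 h.le) (by positivity : (0:ℝ) ≤ w^2 + w + 1)]
    have h58 : w^5 ≤ w^8 := by nlinarith [mul_nonneg (by positivity : (0:ℝ) ≤ w^5) h3]
    nlinarith

private lemma gsq_le_b1 {P G R : ℝ} (hP : 0 < P) (hG : 0 < G) (hR : 0 < R) :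
    (P^8/(P^8+G^8*R^8))^2 / (P^6 * (G*P/(R*(P^2+G^2*R^2)))) ≤ 2*R/(G*P^5) := by
  have hw : 0 ≤ G*R/P := by positivity
  have key : (P^8/(P^8+G^8*R^8))^2 / (P^6 * (G*P/(R*(P^2+G^2*R^2))))
      = ((1+(G*R/P)^2)/(2*(1+(G*R/P)^8)^2)) * (2*R/(G*P^5)) := by
    field_simp
  rw [key]
  have h1 : (1+(G*R/P)^2)/(2*(1+(G*R/P)^8)^2) ≤ 1 := by
    rw [div_le_one (by positivity)]
    exact poly1 hw
  calc ((1+(G*R/P)^2)/(2*(1+(G*R/P)^8)^2)) * (2*R/(G*P^5))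
      ≤ 1 * (2*R/(G*P^5)) := mul_le_mul_of_nonneg_right h1 (by positivity)
    _ = 2*R/(G*P^5) := one_mul _

private lemma gsq_le_b2 {P G R : ℝ} (hP : 0 < P) (hG : 0 < G) (hR : 0 < R) :
    (P^8/(P^8+G^8*R^8))^2 / (P^6 * (G*P/(R*(P^2+G^2*R^2)))) ≤ 2/(G^6*R^4) := by
  have hw : 0 ≤ G*R/P := by positivity
  have key : (P^8/(P^8+G^8*R^8))^2 / (P^6 * (G*P/(R*(P^2+G^2*R^2))))
      = ((1+(G*R/P)^2)*(G*R/P)^5/(2*(1+(G*R/P)^8)^2)) * (2/(G^6*R^4)) := by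
    field_simp
  rw [key]
  have h1 : (1+(G*R/P)^2)*(G*R/P)^5/(2*(1+(G*R/P)^8)^2) ≤ 1 := by
    rw [div_le_one (by positivity)]
    exact poly2 hw
  calc ((1+(G*R/P)^2)*(G*R/P)^5/(2*(1+(G*R/P)^8)^2)) * (2/(G^6*R^4))
      ≤ 1 * (2/(G^6*R^4)) := mul_le_mul_of_nonneg_right h1 (by positivity)
    _ = 2/(G^6*R^4) := one_mul _

private lemma lintegral_m_le {P G : ℝ} (hP : 0 < P) (hG : 0 < G) :
    (∫⁻ ϱ in Set.Ioi (0:ℝ),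
      ENNReal.ofReal (G*P/(ϱ^((1:ℝ)/2) * (P^2 + G^2*ϱ)))) ≤ ENNReal.ofReal 4 := by
  set T := P^2/G^2 with hTdef
  have hTpos : 0 < T := by positivity
  have hT12 : T ^ ((1:ℝ)/2) = P/G := by
    rw [hTdef, show P^2/G^2 = (P/G)^2 by ring, ← Real.rpow_natCast (P/G) 2,
      ← Real.rpow_mul (by positivity)]
    norm_num
  rw [← Set.Ioc_union_Ioi_eq_Ioi hTpos.le,
    lintegral_union measurableSet_Ioi Set.Ioc_disjoint_Ioi_same]
  have piece1 : (∫⁻ ϱ in Set.Ioc (0:ℝ) T,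
      ENNReal.ofReal (G*P/(ϱ^((1:ℝ)/2) * (P^2 + G^2*ϱ)))) ≤ ENNReal.ofReal 2 := by
    have hmono : ∀ ϱ ∈ Set.Ioc (0:ℝ) T,
        ENNReal.ofReal (G*P/(ϱ^((1:ℝ)/2) * (P^2 + G^2*ϱ)))
          ≤ ENNReal.ofReal ((G/P) * ϱ^(-(1:ℝ)/2)) := by
      intro ϱ hϱ
      apply ENNReal.ofReal_le_ofReal
      have h1 : 0 < ϱ^((1:ℝ)/2) := Real.rpow_pos_of_pos hϱ.1 _
      have e : (G/P) * ϱ^(-(1:ℝ)/2) = G*P/(ϱ^((1:ℝ)/2) * P^2) := by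
        rw [show (-(1:ℝ)/2) = -((1:ℝ)/2) by norm_num, Real.rpow_neg hϱ.1.le]
        field_simp
      rw [e]
      gcongr
      nlinarith [hϱ.1, sq_nonneg G]
    calc (∫⁻ ϱ in Set.Ioc (0:ℝ) T, ENNReal.ofReal (G*P/(ϱ^((1:ℝ)/2) * (P^2 + G^2*ϱ))))
        ≤ ∫⁻ ϱ in Set.Ioc (0:ℝ) T, ENNReal.ofReal ((G/P) * ϱ^(-(1:ℝ)/2)) :=
          setLIntegral_mono' measurableSet_Ioc hmono
      _ = ENNReal.ofReal (∫ ϱ in Set.Ioc (0:ℝ) T, (G/P) * ϱ^(-(1:ℝ)/2)) := by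
          rw [ofReal_integral_eq_lintegral_ofReal]
          · have h := (intervalIntegral.intervalIntegrable_rpow'
              (a := 0) (b := T) (r := -(1:ℝ)/2) (by norm_num)).const_mul (G/P)
            rwa [intervalIntegrable_iff, Set.uIoc_of_le hTpos.le] at h
          · refine (ae_restrict_iff' measurableSet_Ioc).2 (Filter.Eventually.of_forall ?_)
            intro ϱ hϱ
            have := Real.rpow_pos_of_pos hϱ.1 (-(1:ℝ)/2)
            positivity
      _ ≤ ENNReal.ofReal 2 := by
          apply ENNReal.ofReal_le_ofReal
          rw [← intervalIntegral.integral_of_le hTpos.le,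
            intervalIntegral.integral_const_mul, integral_rpow (Or.inl (by norm_num))]
          rw [show (-(1:ℝ)/2 + 1) = (1:ℝ)/2 by norm_num, Real.zero_rpow (by norm_num), hT12]
          have : G/P*((P/G - 0)/(1/2)) = 2 := by field_simp; ring
          linarith [this.le]
  have piece2 : (∫⁻ ϱ in Set.Ioi T,
      ENNReal.ofReal (G*P/(ϱ^((1:ℝ)/2) * (P^2 + G^2*ϱ)))) ≤ ENNReal.ofReal 2 := by
    have hmono : ∀ ϱ ∈ Set.Ioi T,
        ENNReal.ofReal (G*P/(ϱ^((1:ℝ)/2) * (P^2 + G^2*ϱ)))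
          ≤ ENNReal.ofReal ((P/G) * ϱ^(-(3:ℝ)/2)) := by
      intro ϱ hϱ
      have hϱpos : 0 < ϱ := lt_trans hTpos hϱ
      apply ENNReal.ofReal_le_ofReal
      have h1 : 0 < ϱ^((1:ℝ)/2) := Real.rpow_pos_of_pos hϱpos _
      have e : (P/G) * ϱ^(-(3:ℝ)/2) = G*P/(ϱ^((1:ℝ)/2) * (G^2*ϱ)) := by
        rw [show (-(3:ℝ)/2) = -((3:ℝ)/2) by norm_num, Real.rpow_neg hϱpos.le,
          show ((3:ℝ)/2) = (1:ℝ)/2 + 1 by norm_num, Real.rpow_add hϱpos, Real.rpow_one]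
        field_simp
      rw [e]
      gcongr
      nlinarith [sq_nonneg P]
    calc (∫⁻ ϱ in Set.Ioi T, ENNReal.ofReal (G*P/(ϱ^((1:ℝ)/2) * (P^2 + G^2*ϱ))))
        ≤ ∫⁻ ϱ in Set.Ioi T, ENNReal.ofReal ((P/G) * ϱ^(-(3:ℝ)/2)) :=
          setLIntegral_mono' measurableSet_Ioi hmono
      _ = ENNReal.ofReal (∫ ϱ in Set.Ioi T, (P/G) * ϱ^(-(3:ℝ)/2)) := by
          rw [ofReal_integral_eq_lintegral_ofReal]
          · exact (integrableOn_Ioi_rpow_of_lt (by norm_num) hTpos).const_mul (P/G)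
          · refine (ae_restrict_iff' measurableSet_Ioi).2 (Filter.Eventually.of_forall ?_)
            intro ϱ hϱ
            have hϱpos : 0 < ϱ := lt_trans hTpos hϱ
            have := Real.rpow_pos_of_pos hϱpos (-(3:ℝ)/2)
            positivity
      _ ≤ ENNReal.ofReal 2 := by
          apply ENNReal.ofReal_le_ofReal
          rw [MeasureTheory.integral_const_mul, show (-(3:ℝ)/2) = (-3/2 : ℝ) by norm_num,
            integral_Ioi_rpow_of_lt (by norm_num) hTpos]
          have hT12' : T ^ (-(3:ℝ)/2 + 1) = G/P := by
            rw [show (-(3:ℝ)/2 + 1) = -((1:ℝ)/2) by norm_num, Real.rpow_neg hTpos.le, hT12]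
            rw [inv_div]
          rw [show ((-3/2 : ℝ) + 1) = -(3:ℝ)/2 + 1 by norm_num, hT12']
          have e2 : P/G*(-(G/P)/(-(3:ℝ)/2 + 1)) = 2 := by
            rw [show (-(3:ℝ)/2 + 1) = -(1/2 : ℝ) by norm_num]
            field_simp
          linarith [e2.le]
  calc _ ≤ ENNReal.ofReal 2 + ENNReal.ofReal 2 := add_le_add piece1 piece2
    _ = ENNReal.ofReal 4 := by rw [← ENNReal.ofReal_add (by norm_num) (by norm_num)]; norm_num




private lemma quarter_pow' {x : ℝ} (hx : 0 ≤ x) (n : ℕ) :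
    x ^ ((n : ℝ)/4) = (x ^ ((1:ℝ)/4)) ^ n := by
  rw [show ((n:ℝ)/4) = (1:ℝ)/4 * (n:ℝ) by ring, Real.rpow_mul hx, Real.rpow_natCast]

private def pp (ℓ : ℕ) : ℝ := Real.pi * ((ℓ:ℝ)+1)

private lemma pp_def (ℓ : ℕ) : pp ℓ = Real.pi * ((ℓ:ℝ)+1) := rfl

private lemma pp_pos (ℓ : ℕ) : 0 < pp ℓ := by
  have := Real.pi_pos
  unfold pp; positivity

private lemma pi_le_pp (ℓ : ℕ) : Real.pi ≤ pp ℓ := by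
  unfold pp
  nlinarith [Real.pi_pos, Nat.cast_nonneg (α := ℝ) ℓ]

private def PP (ℓ : ℕ) : ℝ := (pp ℓ) ^ ((1:ℝ)/4)

private lemma PP_pos (ℓ : ℕ) : 0 < PP ℓ := Real.rpow_pos_of_pos (pp_pos ℓ) _

private lemma one_le_PP (ℓ : ℕ) : 1 ≤ PP ℓ := by
  have h1 : (1:ℝ) ≤ pp ℓ := le_trans (by nlinarith [Real.pi_gt_three]) (pi_le_pp ℓ)
  calc (1:ℝ) = (1:ℝ) ^ ((1:ℝ)/4) := (Real.one_rpow _).symm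
    _ ≤ PP ℓ := Real.rpow_le_rpow (by norm_num) h1 (by norm_num)

private lemma PP4 (ℓ : ℕ) : (PP ℓ)^4 = pp ℓ := by
  rw [PP, ← quarter_pow' (pp_pos ℓ).le 4]
  norm_num

private lemma PP6 (ℓ : ℕ) : (PP ℓ)^6 = (pp ℓ) ^ ((3:ℝ)/2) := by
  rw [PP, ← quarter_pow' (pp_pos ℓ).le 6]
  norm_num

private lemma PP5 (ℓ : ℕ) : (PP ℓ)^5 = (pp ℓ) ^ ((5:ℝ)/4) := by
  rw [PP, ← quarter_pow' (pp_pos ℓ).le 5]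
  norm_num

private def kk (γ : ℝ) (ℓ : ℕ) (ϱ : ℝ) : ℝ := (pp ℓ)^2 / ((pp ℓ)^2 + γ^2*ϱ^4)

private def mm (γ : ℝ) (ℓ : ℕ) (ϱ : ℝ) : ℝ :=
  γ^((1:ℝ)/4) * PP ℓ / (ϱ^((1:ℝ)/2) * ((PP ℓ)^2 + (γ^((1:ℝ)/4))^2 * ϱ))

private lemma mm_pos {γ ϱ : ℝ} (hγ : 0 < γ) (hϱ : 0 < ϱ) (ℓ : ℕ) : 0 < mm γ ℓ ϱ := by
  have hG : 0 < γ^((1:ℝ)/4) := Real.rpow_pos_of_pos hγ _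
  have hR : 0 < ϱ^((1:ℝ)/2) := Real.rpow_pos_of_pos hϱ _
  have hP := PP_pos ℓ
  unfold mm; positivity

private lemma mm_le {γ ϱ : ℝ} (hγ : 0 < γ) (hϱ : 0 < ϱ) (ℓ : ℕ) :
    mm γ ℓ ϱ ≤ γ^((1:ℝ)/4)/ϱ^((1:ℝ)/2) := by
  have hG : 0 < γ^((1:ℝ)/4) := Real.rpow_pos_of_pos hγ _
  have hR : 0 < ϱ^((1:ℝ)/2) := Real.rpow_pos_of_pos hϱ _
  have hP := PP_pos ℓ
  have hP1 := one_le_PP ℓ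
  unfold mm
  rw [div_le_div_iff₀ (by positivity) hR]
  have h1 : ϱ^((1:ℝ)/2) * (PP ℓ)^2 ≤ ϱ^((1:ℝ)/2) * ((PP ℓ)^2 + (γ^((1:ℝ)/4))^2 * ϱ) := by
    nlinarith [mul_nonneg hR.le (mul_nonneg (sq_nonneg (γ^((1:ℝ)/4))) hϱ.le)]
  have hPP : PP ℓ ≤ (PP ℓ)^2 := by nlinarith
  calc γ^((1:ℝ)/4) * PP ℓ * ϱ^((1:ℝ)/2) ≤ γ^((1:ℝ)/4) * (PP ℓ)^2 * ϱ^((1:ℝ)/2) := by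
        nlinarith [mul_le_mul_of_nonneg_right (mul_le_mul_of_nonneg_left hPP hG.le) hR.le]
    _ = γ^((1:ℝ)/4) * (ϱ^((1:ℝ)/2) * (PP ℓ)^2) := by ring
    _ ≤ γ^((1:ℝ)/4) * (ϱ^((1:ℝ)/2) * ((PP ℓ)^2 + (γ^((1:ℝ)/4))^2 * ϱ)) := by
        nlinarith [mul_le_mul_of_nonneg_left h1 hG.le]


private lemma gsq_repr {γ ϱ : ℝ} (hγ : 0 < γ) (hϱ : 0 < ϱ) (ℓ : ℕ) :
    (kk γ ℓ ϱ)^2/((PP ℓ)^6 * mm γ ℓ ϱ)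
      = ((PP ℓ)^8/((PP ℓ)^8+(γ^((1:ℝ)/4))^8*(ϱ^((1:ℝ)/2))^8))^2
        / ((PP ℓ)^6 * ((γ^((1:ℝ)/4))*(PP ℓ)
            /((ϱ^((1:ℝ)/2))*((PP ℓ)^2+(γ^((1:ℝ)/4))^2*(ϱ^((1:ℝ)/2))^2)))) := by
  unfold kk mm
  set P := PP ℓ with hPdef
  set G := γ^((1:ℝ)/4) with hGdef
  set R := ϱ^((1:ℝ)/2) with hRdef
  have hP4 : P^4 = pp ℓ := PP4 ℓ
  have hG4 : G^4 = γ := by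
    rw [hGdef, ← Real.rpow_natCast (γ^((1:ℝ)/4)) 4, ← Real.rpow_mul hγ.le]; norm_num
  have hR2 : R^2 = ϱ := by
    rw [hRdef, ← Real.rpow_natCast (ϱ^((1:ℝ)/2)) 2, ← Real.rpow_mul hϱ.le]; norm_num
  rw [← hP4, ← hG4, ← hR2]
  ring_nf

private lemma gsq_le_bound1 {γ ϱ : ℝ} (hγ : 0 < γ) (hϱ : 0 < ϱ) (ℓ : ℕ) :
    (kk γ ℓ ϱ)^2/((PP ℓ)^6 * mm γ ℓ ϱ)
      ≤ 2*ϱ^((1:ℝ)/2)/(γ^((1:ℝ)/4)*(PP ℓ)^5) := by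
  rw [gsq_repr hγ hϱ ℓ]
  exact gsq_le_b1 (PP_pos ℓ) (Real.rpow_pos_of_pos hγ _) (Real.rpow_pos_of_pos hϱ _)

private lemma gsq_le_bound2 {γ ϱ : ℝ} (hγ : 0 < γ) (hϱ : 0 < ϱ) (ℓ : ℕ) :
    (kk γ ℓ ϱ)^2/((PP ℓ)^6 * mm γ ℓ ϱ)
      ≤ 2/((γ^((1:ℝ)/4))^6*(ϱ^((1:ℝ)/2))^4) := by
  rw [gsq_repr hγ hϱ ℓ]
  exact gsq_le_b2 (PP_pos ℓ) (Real.rpow_pos_of_pos hγ _) (Real.rpow_pos_of_pos hϱ _)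

private lemma summable54 : Summable (fun ℓ : ℕ => ((ℓ:ℝ)+1) ^ (-(5:ℝ)/4)) := by
  have h : Summable (fun n : ℕ => (n:ℝ) ^ (-(5:ℝ)/4)) := by
    rw [Real.summable_nat_rpow]; norm_num
  have h2 := (summable_nat_add_iff (f := fun n : ℕ => (n:ℝ) ^ (-(5:ℝ)/4)) 1).2 h
  apply h2.congr
  intro n
  push_cast
  norm_num

private lemma b1_eq {γ ϱ : ℝ} (hγ : 0 < γ) (hϱ : 0 < ϱ) (ℓ : ℕ) :
    2*ϱ^((1:ℝ)/2)/(γ^((1:ℝ)/4)*(PP ℓ)^5)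
      = (2*ϱ^((1:ℝ)/2)/(γ^((1:ℝ)/4)*Real.pi^((5:ℝ)/4))) * ((ℓ:ℝ)+1)^(-(5:ℝ)/4) := by
  have hc : (0:ℝ) ≤ (ℓ:ℝ)+1 := by positivity
  have h1 : (PP ℓ)^5 = Real.pi^((5:ℝ)/4) * ((ℓ:ℝ)+1)^((5:ℝ)/4) := by
    rw [PP5, pp_def, Real.mul_rpow Real.pi_pos.le hc]
  have h2 : ((ℓ:ℝ)+1)^(-(5:ℝ)/4) = (((ℓ:ℝ)+1)^((5:ℝ)/4))⁻¹ := by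
    rw [show (-(5:ℝ)/4) = -((5:ℝ)/4) by norm_num, Real.rpow_neg hc]
  have hppos : (0:ℝ) < Real.pi^((5:ℝ)/4) := Real.rpow_pos_of_pos Real.pi_pos _
  have hcpos : (0:ℝ) < ((ℓ:ℝ)+1)^((5:ℝ)/4) := Real.rpow_pos_of_pos (by positivity) _
  have hG : (0:ℝ) < γ^((1:ℝ)/4) := Real.rpow_pos_of_pos hγ _
  rw [h1, h2]
  field_simp

private lemma summable_b1 {γ ϱ : ℝ} (hγ : 0 < γ) (hϱ : 0 < ϱ) :
    Summable (fun ℓ : ℕ => 2*ϱ^((1:ℝ)/2)/(γ^((1:ℝ)/4)*(PP ℓ)^5)) := by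
  apply Summable.congr (summable54.mul_left (2*ϱ^((1:ℝ)/2)/(γ^((1:ℝ)/4)*Real.pi^((5:ℝ)/4))))
  intro ℓ
  rw [b1_eq hγ hϱ ℓ]

private lemma summable_gsq {γ ϱ : ℝ} (hγ : 0 < γ) (hϱ : 0 < ϱ) :
    Summable (fun ℓ : ℕ => (kk γ ℓ ϱ)^2/((PP ℓ)^6 * mm γ ℓ ϱ)) := by
  apply Summable.of_nonneg_of_le (fun ℓ => ?_) (fun ℓ => gsq_le_bound1 hγ hϱ ℓ)
    (summable_b1 hγ hϱ)
  have := mm_pos hγ hϱ ℓ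
  have := PP_pos ℓ
  positivity

set_option maxHeartbeats 1000000 in
/-- The key uniform bound on the dual sum. -/
private lemma sum_gsq_le {γ ϱ : ℝ} (hγ : 0 < γ) (hϱ : 0 < ϱ) :
    (∑' ℓ : ℕ, (kk γ ℓ ϱ)^2/((PP ℓ)^6 * mm γ ℓ ϱ))
      ≤ 34/(Real.pi*(γ^((1:ℝ)/4))^2) := by
  have hG : (0:ℝ) < γ^((1:ℝ)/4) := Real.rpow_pos_of_pos hγ _
  have hR : (0:ℝ) < ϱ^((1:ℝ)/2) := Real.rpow_pos_of_pos hϱ _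
  have hG4 : (γ^((1:ℝ)/4))^4 = γ := by
    rw [← Real.rpow_natCast (γ^((1:ℝ)/4)) 4, ← Real.rpow_mul hγ.le]; norm_num
  have hR2 : (ϱ^((1:ℝ)/2))^2 = ϱ := by
    rw [← Real.rpow_natCast (ϱ^((1:ℝ)/2)) 2, ← Real.rpow_mul hϱ.le]; norm_num
  have hsum := summable_gsq hγ hϱ
  obtain ⟨N, hNdef⟩ : ∃ n : ℕ, n = ⌊γ*ϱ^2/Real.pi⌋₊ := ⟨_, rfl⟩
  have hNle : (N:ℝ) ≤ γ*ϱ^2/Real.pi := by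
    rw [hNdef]; exact Nat.floor_le (by positivity)
  have hNlt : γ*ϱ^2/Real.pi < (N:ℝ)+1 := by
    rw [hNdef]; exact Nat.lt_floor_add_one _
  have hsplit := (Summable.sum_add_tsum_nat_add
    (f := fun ℓ : ℕ => (kk γ ℓ ϱ)^2/((PP ℓ)^6 * mm γ ℓ ϱ)) N hsum).symm
  have hgnn : ∀ ℓ : ℕ, 0 ≤ (kk γ ℓ ϱ)^2/((PP ℓ)^6 * mm γ ℓ ϱ) := by
    intro ℓ
    have := mm_pos hγ hϱ ℓ
    have := PP_pos ℓ
    positivity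
  -- head bound
  have hhead : (∑ ℓ ∈ Finset.range N, (kk γ ℓ ϱ)^2/((PP ℓ)^6 * mm γ ℓ ϱ))
      ≤ 2/(Real.pi*(γ^((1:ℝ)/4))^2) := by
    calc (∑ ℓ ∈ Finset.range N, (kk γ ℓ ϱ)^2/((PP ℓ)^6 * mm γ ℓ ϱ))
        ≤ ∑ _ℓ ∈ Finset.range N, 2/((γ^((1:ℝ)/4))^6*(ϱ^((1:ℝ)/2))^4) :=
          Finset.sum_le_sum (fun ℓ _ => gsq_le_bound2 hγ hϱ ℓ)
      _ = (N:ℝ) * (2/((γ^((1:ℝ)/4))^6*(ϱ^((1:ℝ)/2))^4)) := by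
          rw [Finset.sum_const, Finset.card_range, nsmul_eq_mul]
      _ ≤ (γ*ϱ^2/Real.pi) * (2/((γ^((1:ℝ)/4))^6*(ϱ^((1:ℝ)/2))^4)) := by
          apply mul_le_mul_of_nonneg_right hNle
          positivity
      _ = 2/(Real.pi*(γ^((1:ℝ)/4))^2) := by
          have hR4 : (ϱ^((1:ℝ)/2))^4 = ϱ^2 := by
            rw [show (ϱ^((1:ℝ)/2))^4 = ((ϱ^((1:ℝ)/2))^2)^2 by ring, hR2]
          rw [hR4, show ((γ^((1:ℝ)/4)):ℝ)^6 = (γ^((1:ℝ)/4))^4*(γ^((1:ℝ)/4))^2 by ring,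
            hG4]
          have h1 : (0:ℝ) < Real.pi := Real.pi_pos
          field_simp
  -- tail bound
  have htail : (∑' j : ℕ, (kk γ (j+N) ϱ)^2/((PP (j+N))^6 * mm γ (j+N) ϱ))
      ≤ 32/(Real.pi*(γ^((1:ℝ)/4))^2) := by
    have hs1 : Summable (fun j : ℕ => (kk γ (j+N) ϱ)^2/((PP (j+N))^6 * mm γ (j+N) ϱ)) :=
      (summable_nat_add_iff
        (f := fun ℓ : ℕ => (kk γ ℓ ϱ)^2/((PP ℓ)^6 * mm γ ℓ ϱ)) N).2 hsum
    have hs2 : Summable (fun j : ℕ => 2*ϱ^((1:ℝ)/2)/(γ^((1:ℝ)/4)*(PP (j+N))^5)) :=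
      (summable_nat_add_iff
        (f := fun ℓ : ℕ => 2*ϱ^((1:ℝ)/2)/(γ^((1:ℝ)/4)*(PP ℓ)^5)) N).2 (summable_b1 hγ hϱ)
    have step1 : (∑' j : ℕ, (kk γ (j+N) ϱ)^2/((PP (j+N))^6 * mm γ (j+N) ϱ))
        ≤ ∑' j : ℕ, 2*ϱ^((1:ℝ)/2)/(γ^((1:ℝ)/4)*(PP (j+N))^5) :=
      hs1.tsum_le_tsum (fun j => gsq_le_bound1 hγ hϱ (j+N)) hs2
    have step2 : (∑' j : ℕ, 2*ϱ^((1:ℝ)/2)/(γ^((1:ℝ)/4)*(PP (j+N))^5))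
        = (2*ϱ^((1:ℝ)/2)/(γ^((1:ℝ)/4)*Real.pi^((5:ℝ)/4)))
            * ∑' j : ℕ, ((j:ℝ)+((N:ℝ)+1))^(-(5:ℝ)/4) := by
      rw [← tsum_mul_left]
      apply tsum_congr
      intro j
      rw [b1_eq hγ hϱ (j+N)]
      congr 2
      push_cast
      ring
    have step3 : (∑' j : ℕ, ((j:ℝ)+((N:ℝ)+1))^(-(5:ℝ)/4)) ≤ 16*((N:ℝ)+1)^(-(1:ℝ)/4) :=
      tele (by linarith [Nat.cast_nonneg (α := ℝ) N] : (1:ℝ) ≤ (N:ℝ)+1)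
    have step4 : ((N:ℝ)+1)^(-(1:ℝ)/4) ≤ Real.pi^((1:ℝ)/4)/(γ^((1:ℝ)/4)*ϱ^((1:ℝ)/2)) := by
      have hlt : γ*ϱ^2/Real.pi < (N:ℝ)+1 := hNlt
      have hpos : (0:ℝ) < γ*ϱ^2/Real.pi := by positivity
      have h1 : ((N:ℝ)+1)^(-(1:ℝ)/4) ≤ (γ*ϱ^2/Real.pi)^(-(1:ℝ)/4) :=
        Real.rpow_le_rpow_of_nonpos hpos hlt.le (by norm_num)
      have h2 : (γ*ϱ^2/Real.pi)^(-(1:ℝ)/4)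
          = Real.pi^((1:ℝ)/4)/(γ^((1:ℝ)/4)*ϱ^((1:ℝ)/2)) := by
        rw [show (-(1:ℝ)/4) = -((1:ℝ)/4) by norm_num, Real.rpow_neg hpos.le,
          Real.div_rpow (by positivity) Real.pi_pos.le,
          Real.mul_rpow hγ.le (by positivity)]
        rw [show ((ϱ^2 : ℝ)) = ϱ^(2:ℕ) by norm_num, ← Real.rpow_natCast ϱ 2,
          ← Real.rpow_mul hϱ.le]
        norm_num [inv_div]
      rw [h2] at h1
      exact h1
    have hCb : (0:ℝ) ≤ 2*ϱ^((1:ℝ)/2)/(γ^((1:ℝ)/4)*Real.pi^((5:ℝ)/4)) := by positivity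
    have step5 : (2*ϱ^((1:ℝ)/2)/(γ^((1:ℝ)/4)*Real.pi^((5:ℝ)/4)))
        * (16*(Real.pi^((1:ℝ)/4)/(γ^((1:ℝ)/4)*ϱ^((1:ℝ)/2))))
        = 32/(Real.pi*(γ^((1:ℝ)/4))^2) := by
      have hpi54 : Real.pi^((5:ℝ)/4) = Real.pi * Real.pi^((1:ℝ)/4) := by
        rw [show ((5:ℝ)/4) = 1 + (1:ℝ)/4 by norm_num, Real.rpow_add Real.pi_pos,
          Real.rpow_one]
      have h14 : (0:ℝ) < Real.pi^((1:ℝ)/4) := Real.rpow_pos_of_pos Real.pi_pos _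
      rw [hpi54]
      field_simp
      ring
    calc (∑' j : ℕ, (kk γ (j+N) ϱ)^2/((PP (j+N))^6 * mm γ (j+N) ϱ))
        ≤ (2*ϱ^((1:ℝ)/2)/(γ^((1:ℝ)/4)*Real.pi^((5:ℝ)/4)))
            * ∑' j : ℕ, ((j:ℝ)+((N:ℝ)+1))^(-(5:ℝ)/4) := by rw [← step2]; exact step1
      _ ≤ (2*ϱ^((1:ℝ)/2)/(γ^((1:ℝ)/4)*Real.pi^((5:ℝ)/4))) * (16*((N:ℝ)+1)^(-(1:ℝ)/4)) := by
          apply mul_le_mul_of_nonneg_left ?_ hCb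
          linarith [step3]
      _ ≤ (2*ϱ^((1:ℝ)/2)/(γ^((1:ℝ)/4)*Real.pi^((5:ℝ)/4)))
            * (16*(Real.pi^((1:ℝ)/4)/(γ^((1:ℝ)/4)*ϱ^((1:ℝ)/2)))) := by
          apply mul_le_mul_of_nonneg_left ?_ hCb
          nlinarith [step4]
      _ = 32/(Real.pi*(γ^((1:ℝ)/4))^2) := step5
  calc (∑' ℓ : ℕ, (kk γ ℓ ϱ)^2/((PP ℓ)^6 * mm γ ℓ ϱ))
      = (∑ ℓ ∈ Finset.range N, (kk γ ℓ ϱ)^2/((PP ℓ)^6 * mm γ ℓ ϱ))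
        + ∑' j : ℕ, (kk γ (j+N) ϱ)^2/((PP (j+N))^6 * mm γ (j+N) ϱ) := hsplit
    _ ≤ 2/(Real.pi*(γ^((1:ℝ)/4))^2) + 32/(Real.pi*(γ^((1:ℝ)/4))^2) := add_le_add hhead htail
    _ = 34/(Real.pi*(γ^((1:ℝ)/4))^2) := by ring


private lemma cosB_sq {v : ℝ} (hv : v = 0 ∨ v = 1) (ℓ : ℕ) : (cosB (ℓ+1) v)^2 = 2 := by
  have h2 : Real.sqrt 2 ^ 2 = 2 := Real.sq_sqrt (by norm_num)
  rcases hv with rfl | rfl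
  · unfold cosB
    rw [if_neg (Nat.succ_ne_zero ℓ)]
    rw [mul_zero, Real.cos_zero]
    rw [mul_one]
    exact h2
  · unfold cosB
    rw [if_neg (Nat.succ_ne_zero ℓ)]
    have hs : Real.sin (Real.pi * ((ℓ+1:ℕ):ℝ) * 1) = 0 := by
      rw [mul_one, mul_comm]
      exact Real.sin_nat_mul_pi (ℓ+1)
    have hc : Real.cos (Real.pi * ((ℓ+1:ℕ):ℝ) * 1) ^ 2 = 1 := by
      have := Real.sin_sq_add_cos_sq (Real.pi * ((ℓ+1:ℕ):ℝ) * 1)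
      rw [hs] at this
      nlinarith
    rw [mul_pow, h2, hc, mul_one]

private lemma mm_measurable (γ : ℝ) (ℓ : ℕ) : Measurable (fun ϱ : ℝ => mm γ ℓ ϱ) := by
  unfold mm
  have hhalf : Measurable fun x : ℝ => x ^ ((1:ℝ)/2) := by measurability
  exact measurable_const.div (hhalf.mul ((measurable_id.const_mul _).const_add _))

private lemma lintegral_term_le {γ : ℝ} (hγ : 0 < γ) (c : ℝ) (hc : 0 ≤ c) (ℓ : ℕ) :
    (∫⁻ ϱ in Set.Ioi (0:ℝ), ENNReal.ofReal (c * mm γ ℓ ϱ)) ≤ ENNReal.ofReal (4*c) := by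
  have heq : ∀ ϱ : ℝ,
      ENNReal.ofReal (c * mm γ ℓ ϱ) = ENNReal.ofReal c * ENNReal.ofReal (mm γ ℓ ϱ) :=
    fun ϱ => ENNReal.ofReal_mul hc
  simp_rw [heq]
  rw [lintegral_const_mul' _ _ ENNReal.ofReal_ne_top]
  calc ENNReal.ofReal c * ∫⁻ ϱ in Set.Ioi (0:ℝ), ENNReal.ofReal (mm γ ℓ ϱ)
      ≤ ENNReal.ofReal c * ENNReal.ofReal 4 :=
        mul_le_mul_right (lintegral_m_le (PP_pos ℓ) (Real.rpow_pos_of_pos hγ _)) _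
    _ = ENNReal.ofReal (4*c) := by
        rw [← ENNReal.ofReal_mul hc, mul_comm]

private lemma pointwise_bound {γ : ℝ} (hγ : 0 < γ) (φ : ℝ → ℝ) {v : ℝ} (hv : v = 0 ∨ v = 1)
    (hS : Summable (fun ℓ : ℕ => (pp ℓ)^((3:ℝ)/2) * (cosCoeff φ (ℓ+1))^2))
    {ϱ : ℝ} (hϱ : 0 < ϱ) :
    ENNReal.ofReal ((∑' ℓ : ℕ, cosB (ℓ+1) v * cosCoeff φ (ℓ+1) * (pp ℓ)^2
        / ((pp ℓ)^2 + γ^2*ϱ^4))^2)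
      ≤ ENNReal.ofReal (34/(Real.pi*(γ^((1:ℝ)/4))^2))
          * ∑' ℓ : ℕ, ENNReal.ofReal ((2*(cosCoeff φ (ℓ+1))^2*(PP ℓ)^6) * mm γ ℓ ϱ) := by
  have hG : (0:ℝ) < γ^((1:ℝ)/4) := Real.rpow_pos_of_pos hγ _
  have hR : (0:ℝ) < ϱ^((1:ℝ)/2) := Real.rpow_pos_of_pos hϱ _
  have hm : ∀ ℓ, 0 < mm γ ℓ ϱ := mm_pos hγ hϱ
  have hcos2 : ∀ ℓ : ℕ, (cosB (ℓ+1) v)^2 = 2 := cosB_sq hv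
  have hS6 : Summable (fun ℓ : ℕ => (PP ℓ)^6*(cosCoeff φ (ℓ+1))^2) :=
    hS.congr (fun ℓ => by rw [← PP6 ℓ])
  -- the Cauchy-Schwarz factors
  have key : ∀ ℓ : ℕ, cosB (ℓ+1) v * cosCoeff φ (ℓ+1) * (pp ℓ)^2 / ((pp ℓ)^2 + γ^2*ϱ^4)
      = ((cosB (ℓ+1) v * cosCoeff φ (ℓ+1)) * ((PP ℓ)^3 * Real.sqrt (mm γ ℓ ϱ)))
        * (kk γ ℓ ϱ / ((PP ℓ)^3 * Real.sqrt (mm γ ℓ ϱ))) := by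
    intro ℓ
    have h1 := PP_pos ℓ
    have h2 : 0 < Real.sqrt (mm γ ℓ ϱ) := Real.sqrt_pos.2 (hm ℓ)
    have hD : (0:ℝ) < (pp ℓ)^2 + γ^2*ϱ^4 := by
      have := pp_pos ℓ
      positivity
    unfold kk
    field_simp
  have hfsq : ∀ ℓ : ℕ, (((cosB (ℓ+1) v * cosCoeff φ (ℓ+1)) * ((PP ℓ)^3 * Real.sqrt (mm γ ℓ ϱ))))^2
      = (2*(cosCoeff φ (ℓ+1))^2*(PP ℓ)^6) * mm γ ℓ ϱ := by
    intro ℓ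
    rw [mul_pow, mul_pow, mul_pow, Real.sq_sqrt (hm ℓ).le, hcos2 ℓ]
    ring
  have hgsq : ∀ ℓ : ℕ, ((kk γ ℓ ϱ / ((PP ℓ)^3 * Real.sqrt (mm γ ℓ ϱ))))^2
      = (kk γ ℓ ϱ)^2/((PP ℓ)^6 * mm γ ℓ ϱ) := by
    intro ℓ
    simp only [div_pow, mul_pow, Real.sq_sqrt (hm ℓ).le]
    ring
  have hf2 : Summable (fun ℓ : ℕ =>
      (((cosB (ℓ+1) v * cosCoeff φ (ℓ+1)) * ((PP ℓ)^3 * Real.sqrt (mm γ ℓ ϱ))))^2) := by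
    apply Summable.of_nonneg_of_le (fun ℓ => sq_nonneg _) (fun ℓ => ?_)
      (hS6.mul_left (2*(γ^((1:ℝ)/4)/ϱ^((1:ℝ)/2))))
    rw [hfsq ℓ]
    have hc : (0:ℝ) ≤ 2*(cosCoeff φ (ℓ+1))^2*(PP ℓ)^6 := by
      have := PP_pos ℓ
      positivity
    calc (2*(cosCoeff φ (ℓ+1))^2*(PP ℓ)^6) * mm γ ℓ ϱ
        ≤ (2*(cosCoeff φ (ℓ+1))^2*(PP ℓ)^6) * (γ^((1:ℝ)/4)/ϱ^((1:ℝ)/2)) :=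
          mul_le_mul_of_nonneg_left (mm_le hγ hϱ ℓ) hc
      _ = 2*(γ^((1:ℝ)/4)/ϱ^((1:ℝ)/2)) * ((PP ℓ)^6*(cosCoeff φ (ℓ+1))^2) := by ring
  have hg2 : Summable (fun ℓ : ℕ =>
      ((kk γ ℓ ϱ / ((PP ℓ)^3 * Real.sqrt (mm γ ℓ ϱ))))^2) :=
    (summable_gsq hγ hϱ).congr (fun ℓ => (hgsq ℓ).symm)
  have CS := cs_tsum hf2 hg2
  have hsum_eq : (∑' ℓ : ℕ, cosB (ℓ+1) v * cosCoeff φ (ℓ+1) * (pp ℓ)^2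
      / ((pp ℓ)^2 + γ^2*ϱ^4))
      = ∑' ℓ : ℕ, ((cosB (ℓ+1) v * cosCoeff φ (ℓ+1)) * ((PP ℓ)^3 * Real.sqrt (mm γ ℓ ϱ)))
        * (kk γ ℓ ϱ / ((PP ℓ)^3 * Real.sqrt (mm γ ℓ ϱ))) := tsum_congr key
  have hF1eq : (∑' ℓ : ℕ,
      (((cosB (ℓ+1) v * cosCoeff φ (ℓ+1)) * ((PP ℓ)^3 * Real.sqrt (mm γ ℓ ϱ))))^2)
      = ∑' ℓ : ℕ, (2*(cosCoeff φ (ℓ+1))^2*(PP ℓ)^6) * mm γ ℓ ϱ := tsum_congr hfsq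
  have hF2eq : (∑' ℓ : ℕ, ((kk γ ℓ ϱ / ((PP ℓ)^3 * Real.sqrt (mm γ ℓ ϱ))))^2)
      = ∑' ℓ : ℕ, (kk γ ℓ ϱ)^2/((PP ℓ)^6 * mm γ ℓ ϱ) := tsum_congr hgsq
  have hF1nn : (0:ℝ) ≤ ∑' ℓ : ℕ, (2*(cosCoeff φ (ℓ+1))^2*(PP ℓ)^6) * mm γ ℓ ϱ :=
    tsum_nonneg (fun ℓ => by
      have h1 := PP_pos ℓ
      have h2 := (hm ℓ).le
      positivity)
  have hreal : (∑' ℓ : ℕ, cosB (ℓ+1) v * cosCoeff φ (ℓ+1) * (pp ℓ)^2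
      / ((pp ℓ)^2 + γ^2*ϱ^4))^2
      ≤ (34/(Real.pi*(γ^((1:ℝ)/4))^2))
        * ∑' ℓ : ℕ, (2*(cosCoeff φ (ℓ+1))^2*(PP ℓ)^6) * mm γ ℓ ϱ := by
    rw [hsum_eq]
    rw [hF1eq, hF2eq] at CS
    calc (∑' ℓ : ℕ, ((cosB (ℓ+1) v * cosCoeff φ (ℓ+1)) * ((PP ℓ)^3 * Real.sqrt (mm γ ℓ ϱ)))
          * (kk γ ℓ ϱ / ((PP ℓ)^3 * Real.sqrt (mm γ ℓ ϱ))))^2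
        ≤ (∑' ℓ : ℕ, (2*(cosCoeff φ (ℓ+1))^2*(PP ℓ)^6) * mm γ ℓ ϱ)
          * ∑' ℓ : ℕ, (kk γ ℓ ϱ)^2/((PP ℓ)^6 * mm γ ℓ ϱ) := CS
      _ ≤ (∑' ℓ : ℕ, (2*(cosCoeff φ (ℓ+1))^2*(PP ℓ)^6) * mm γ ℓ ϱ)
          * (34/(Real.pi*(γ^((1:ℝ)/4))^2)) :=
          mul_le_mul_of_nonneg_left (sum_gsq_le hγ hϱ) hF1nn
      _ = (34/(Real.pi*(γ^((1:ℝ)/4))^2))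
          * ∑' ℓ : ℕ, (2*(cosCoeff φ (ℓ+1))^2*(PP ℓ)^6) * mm γ ℓ ϱ := mul_comm _ _
  have hsumF1 : Summable (fun ℓ : ℕ => (2*(cosCoeff φ (ℓ+1))^2*(PP ℓ)^6) * mm γ ℓ ϱ) :=
    hf2.congr hfsq
  calc ENNReal.ofReal ((∑' ℓ : ℕ, cosB (ℓ+1) v * cosCoeff φ (ℓ+1) * (pp ℓ)^2
        / ((pp ℓ)^2 + γ^2*ϱ^4))^2)
      ≤ ENNReal.ofReal ((34/(Real.pi*(γ^((1:ℝ)/4))^2))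
          * ∑' ℓ : ℕ, (2*(cosCoeff φ (ℓ+1))^2*(PP ℓ)^6) * mm γ ℓ ϱ) :=
        ENNReal.ofReal_le_ofReal hreal
    _ = ENNReal.ofReal (34/(Real.pi*(γ^((1:ℝ)/4))^2))
        * ENNReal.ofReal (∑' ℓ : ℕ, (2*(cosCoeff φ (ℓ+1))^2*(PP ℓ)^6) * mm γ ℓ ϱ) := by
        rw [ENNReal.ofReal_mul (by positivity)]
    _ = ENNReal.ofReal (34/(Real.pi*(γ^((1:ℝ)/4))^2))
        * ∑' ℓ : ℕ, ENNReal.ofReal ((2*(cosCoeff φ (ℓ+1))^2*(PP ℓ)^6) * mm γ ℓ ϱ) := by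
        rw [ENNReal.ofReal_tsum_of_nonneg (fun ℓ => by
          have h1 := PP_pos ℓ
          have h2 := (hm ℓ).le
          positivity) hsumF1]

/-- Uniform square-integrability in `ϱ` of the boundary functionals
`Φ_v(ϱ;φ)` for `φ ∈ H^{3/4}[0,1]`. -/
theorem boundary_functional_L2_bound (γ : ℝ) (hγ : 0 < γ) :
    ∃ C > (0:ℝ), ∀ φ : ℝ → ℝ, MemH (3/4) φ → ∀ v : ℝ, (v = 0 ∨ v = 1) →
      (∫⁻ ϱ in Set.Ioi (0:ℝ), ENNReal.ofReal
          ((∑' ℓ : ℕ, cosB (ℓ + 1) v * cosCoeff φ (ℓ + 1)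
              * (Real.pi * ((ℓ : ℝ) + 1)) ^ 2
              / ((Real.pi * ((ℓ : ℝ) + 1)) ^ 2 + γ ^ 2 * ϱ ^ 4)) ^ 2))
        ≤ ENNReal.ofReal
            (C * ∑' ℓ : ℕ, (Real.pi * ((ℓ : ℝ) + 1)) ^ ((3:ℝ)/2)
              * (cosCoeff φ (ℓ + 1)) ^ 2) := by
  have hG : (0:ℝ) < γ^((1:ℝ)/4) := Real.rpow_pos_of_pos hγ _
  have hπ := Real.pi_pos
  refine ⟨272/(Real.pi*(γ^((1:ℝ)/4))^2), by positivity, ?_⟩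
  intro φ hφ v hv
  simp only [← pp_def]
  have hS : Summable (fun ℓ : ℕ => (pp ℓ)^((3:ℝ)/2) * (cosCoeff φ (ℓ+1))^2) := by
    have h2 := hφ.2
    simp only [show (2*(3/4:ℝ)) = (3:ℝ)/2 from by norm_num, ← pp_def] at h2
    exact h2
  have hS6 : Summable (fun ℓ : ℕ => (PP ℓ)^6*(cosCoeff φ (ℓ+1))^2) :=
    hS.congr (fun ℓ => by rw [← PP6 ℓ])
  have hsum8 : Summable (fun ℓ : ℕ => 4*(2*(cosCoeff φ (ℓ+1))^2*(PP ℓ)^6)) :=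
    (hS6.mul_left 8).congr (fun ℓ => by ring)
  have hmeas : ∀ ℓ : ℕ, AEMeasurable
      (fun ϱ : ℝ => ENNReal.ofReal ((2*(cosCoeff φ (ℓ+1))^2*(PP ℓ)^6) * mm γ ℓ ϱ))
      (volume.restrict (Set.Ioi (0:ℝ))) := fun ℓ =>
    (((mm_measurable γ ℓ).const_mul _).ennreal_ofReal).aemeasurable
  calc (∫⁻ ϱ in Set.Ioi (0:ℝ), ENNReal.ofReal
        ((∑' ℓ : ℕ, cosB (ℓ + 1) v * cosCoeff φ (ℓ + 1) * (pp ℓ) ^ 2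
            / ((pp ℓ) ^ 2 + γ ^ 2 * ϱ ^ 4)) ^ 2))
      ≤ ∫⁻ ϱ in Set.Ioi (0:ℝ),
          (ENNReal.ofReal (34/(Real.pi*(γ^((1:ℝ)/4))^2))
            * ∑' ℓ : ℕ, ENNReal.ofReal ((2*(cosCoeff φ (ℓ+1))^2*(PP ℓ)^6) * mm γ ℓ ϱ)) :=
        setLIntegral_mono' measurableSet_Ioi (fun ϱ hϱ => pointwise_bound hγ φ hv hS hϱ)
    _ = ENNReal.ofReal (34/(Real.pi*(γ^((1:ℝ)/4))^2))
        * ∫⁻ ϱ in Set.Ioi (0:ℝ),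
            ∑' ℓ : ℕ, ENNReal.ofReal ((2*(cosCoeff φ (ℓ+1))^2*(PP ℓ)^6) * mm γ ℓ ϱ) :=
        lintegral_const_mul' _ _ ENNReal.ofReal_ne_top
    _ = ENNReal.ofReal (34/(Real.pi*(γ^((1:ℝ)/4))^2))
        * ∑' ℓ : ℕ, ∫⁻ ϱ in Set.Ioi (0:ℝ),
            ENNReal.ofReal ((2*(cosCoeff φ (ℓ+1))^2*(PP ℓ)^6) * mm γ ℓ ϱ) := by
        rw [lintegral_tsum hmeas]
    _ ≤ ENNReal.ofReal (34/(Real.pi*(γ^((1:ℝ)/4))^2))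
        * ∑' ℓ : ℕ, ENNReal.ofReal (4*(2*(cosCoeff φ (ℓ+1))^2*(PP ℓ)^6)) := by
        apply mul_le_mul_right
        apply ENNReal.tsum_le_tsum
        intro ℓ
        apply lintegral_term_le hγ _ ?_ ℓ
        have := PP_pos ℓ
        positivity
    _ = ENNReal.ofReal (34/(Real.pi*(γ^((1:ℝ)/4))^2))
        * ENNReal.ofReal (∑' ℓ : ℕ, 4*(2*(cosCoeff φ (ℓ+1))^2*(PP ℓ)^6)) := by
        rw [ENNReal.ofReal_tsum_of_nonneg (fun ℓ => by
          have := PP_pos ℓ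
          positivity) hsum8]
    _ = ENNReal.ofReal ((34/(Real.pi*(γ^((1:ℝ)/4))^2))
        * ∑' ℓ : ℕ, 4*(2*(cosCoeff φ (ℓ+1))^2*(PP ℓ)^6)) :=
        (ENNReal.ofReal_mul (by positivity)).symm
    _ ≤ ENNReal.ofReal (272/(Real.pi*(γ^((1:ℝ)/4))^2)
        * ∑' ℓ : ℕ, (pp ℓ) ^ ((3:ℝ)/2) * (cosCoeff φ (ℓ + 1)) ^ 2) := by
        apply ENNReal.ofReal_le_ofReal
        have he : (∑' ℓ : ℕ, 4*(2*(cosCoeff φ (ℓ+1))^2*(PP ℓ)^6))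
            = 8 * ∑' ℓ : ℕ, (pp ℓ)^((3:ℝ)/2)*(cosCoeff φ (ℓ+1))^2 := by
          rw [← tsum_mul_left]
          exact tsum_congr (fun ℓ => by rw [← PP6 ℓ]; ring)
        rw [he]
        have : (34/(Real.pi*(γ^((1:ℝ)/4))^2))
            * (8 * ∑' ℓ : ℕ, (pp ℓ)^((3:ℝ)/2)*(cosCoeff φ (ℓ+1))^2)
            = 272/(Real.pi*(γ^((1:ℝ)/4))^2)
            * ∑' ℓ : ℕ, (pp ℓ)^((3:ℝ)/2)*(cosCoeff φ (ℓ+1))^2 := by ring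
        rw [this]


end
end

section
/- There exists a constant C_K > 0 such that for every real sequence (a_ℓ)_{ℓ≥1} with finitely many nonzero entries: 0 ≤ (π/2^{3/2})·Σ_{v∈{0,1}} Σ_{ℓ,ℓ′≥1} 𝒦_v(ℓ,ℓ′)·a_ℓ·a_{ℓ′} ≤ C_K·Σ_{ℓ≥1}(πℓ)^{3/2} a_ℓ², where 𝒦_v(ℓ,ℓ′) := c_ℓ(v)·c_{ℓ′}(v)·(πℓ)^{1/2}(πℓ′)^{1/2}·(πℓ + πℓ′ + (π²ℓℓ′)^{1/2}) / ( ((πℓ)^{1/2} + (πℓ′)^{1/2})·(πℓ + πℓ′) ). -/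
open MeasureTheory Real Filter
open Set

noncomputable section

/-- The kernel
`𝒦_v(ℓ,ℓ′) = c_ℓ(v) c_{ℓ′}(v) (πℓ)^{1/2} (πℓ′)^{1/2} (πℓ + πℓ′ + (π²ℓℓ′)^{1/2})
  / (((πℓ)^{1/2} + (πℓ′)^{1/2})(πℓ + πℓ′))`. -/
def Kker (v : ℝ) (ℓ ℓ' : ℕ) : ℝ :=
  cosB ℓ v * cosB ℓ' v * Real.sqrt (Real.pi * ℓ) * Real.sqrt (Real.pi * ℓ')
    * (Real.pi * ℓ + Real.pi * ℓ' + Real.sqrt (Real.pi ^ 2 * ℓ * ℓ'))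
    / ((Real.sqrt (Real.pi * ℓ) + Real.sqrt (Real.pi * ℓ')) * (Real.pi * ℓ + Real.pi * ℓ'))

/-- The quadratic form `(π/2^{3/2}) ∑_{v∈{0,1}} ∑_{ℓ,ℓ′≥1} 𝒦_v(ℓ,ℓ′) a_ℓ a_{ℓ′}`. -/
def Kform (a : ℕ → ℝ) : ℝ :=
  Real.pi / (2:ℝ) ^ ((3:ℝ)/2) *
    ((∑' q : ℕ × ℕ, Kker 0 (q.1 + 1) (q.2 + 1) * a (q.1 + 1) * a (q.2 + 1))
      + ∑' q : ℕ × ℕ, Kker 1 (q.1 + 1) (q.2 + 1) * a (q.1 + 1) * a (q.2 + 1))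

lemma integral_exp_neg_mul_Ioi_zero {b : ℝ} (hb : 0 < b) :
    ∫ x in Ioi (0:ℝ), Real.exp (-(b * x)) = 1 / b := by
  have := integral_comp_mul_left_Ioi (fun y => Real.exp (-y)) 0 hb
  simp only [mul_zero] at this
  rw [show (fun x => Real.exp (-(b*x))) = (fun x => Real.exp (-(b*x))) from rfl]
  calc ∫ x in Ioi (0:ℝ), Real.exp (-(b * x)) = b⁻¹ • ∫ y in Ioi (0:ℝ), Real.exp (-y) := this
    _ = 1 / b := by rw [integral_exp_neg_Ioi_zero]; simp [one_div]

lemma sum_exp_integral {ι : Type*} (P : Finset ι) (C w : ι → ℝ) (hw : ∀ i ∈ P, 0 < w i) :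
    ∫ x in Ioi (0:ℝ), (∑ i ∈ P, C i * Real.exp (-(w i * x))) = ∑ i ∈ P, C i / w i := by
  rw [MeasureTheory.integral_finset_sum]
  · refine Finset.sum_congr rfl fun i hi => ?_
    rw [MeasureTheory.integral_const_mul, integral_exp_neg_mul_Ioi_zero (hw i hi)]
    ring
  · intro i hi
    have : IntegrableOn (fun x : ℝ => Real.exp (-(w i) * x)) (Ioi 0) :=
      exp_neg_integrableOn_Ioi 0 (hw i hi)
    simpa [neg_mul] using this.const_mul (C i)

lemma psd_recip {ι : Type*} (F : Finset ι) (c u : ι → ℝ) (hu : ∀ i ∈ F, 0 < u i) :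
    0 ≤ ∑ n ∈ F, ∑ k ∈ F, c n * c k / (u n + u k) := by
  have key : ∑ n ∈ F, ∑ k ∈ F, c n * c k / (u n + u k)
      = ∫ x in Ioi (0:ℝ), (∑ n ∈ F, c n * Real.exp (-(u n * x)))^2 := by
    have h1 : ∀ x : ℝ, (∑ n ∈ F, c n * Real.exp (-(u n * x)))^2
        = ∑ p ∈ F ×ˢ F, (c p.1 * c p.2) * Real.exp (-((u p.1 + u p.2) * x)) := by
      intro x
      rw [sq, Finset.sum_mul_sum, ← Finset.sum_product']
      refine Finset.sum_congr rfl fun p _ => ?_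
      rw [show -((u p.1 + u p.2) * x) = -(u p.1 * x) + -(u p.2 * x) by ring, Real.exp_add]
      ring
    rw [show (fun x => (∑ n ∈ F, c n * Real.exp (-(u n * x)))^2)
        = fun x => ∑ p ∈ F ×ˢ F, (c p.1 * c p.2) * Real.exp (-((u p.1 + u p.2) * x))
        from funext h1]
    rw [sum_exp_integral (F ×ˢ F) (fun p => c p.1 * c p.2) (fun p => u p.1 + u p.2)
      (fun p hp => by
        rw [Finset.mem_product] at hp
        exact add_pos (hu _ hp.1) (hu _ hp.2)), ← Finset.sum_product']
  rw [key]
  exact MeasureTheory.setIntegral_nonneg measurableSet_Ioi fun x _ => sq_nonneg _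

lemma one_le_sqrt' {x : ℝ} (h : 1 ≤ x) : 1 ≤ Real.sqrt x := by
  rw [← Real.sqrt_one]; exact Real.sqrt_le_sqrt h

def qR (n : ℕ) : ℝ := Real.sqrt (Real.sqrt ((n:ℝ)+1))

lemma one_le_qR (n : ℕ) : 1 ≤ qR n :=
  one_le_sqrt' (one_le_sqrt' (by linarith [Nat.cast_nonneg (α:=ℝ) n]))

lemma qR_pos (n : ℕ) : 0 < qR n := lt_of_lt_of_le one_pos (one_le_qR n)

lemma qR_pow4 (n : ℕ) : (qR n)^4 = (n:ℝ)+1 := by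
  have h1 : (0:ℝ) ≤ (n:ℝ)+1 := by positivity
  rw [qR, show (4:ℕ) = 2*2 by norm_num, pow_mul, Real.sq_sqrt (Real.sqrt_nonneg _),
    Real.sq_sqrt h1]

lemma qR_mono {n m : ℕ} (h : n ≤ m) : qR n ≤ qR m := by
  apply Real.sqrt_le_sqrt; apply Real.sqrt_le_sqrt
  have : (n:ℝ) ≤ m := Nat.cast_le.2 h
  linarith

lemma qR_succ_le (n : ℕ) : qR (n+1) ≤ 2 * qR n := by
  have h4 : (qR (n+1))^4 ≤ (2 * qR n)^4 := by
    rw [qR_pow4]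
    have h := qR_pow4 n
    have hn : (0:ℝ) ≤ (n:ℝ) := Nat.cast_nonneg n
    push_cast
    nlinarith [h]
  exact le_of_pow_le_pow_left₀ (by norm_num) (by linarith [qR_pos n]) h4

lemma lemA : ∀ N : ℕ, ∑ k ∈ Finset.range N, ((qR k)^3)⁻¹ ≤ 16 * qR N - 16 := by
  intro N
  induction N with
  | zero => simp [qR]
  | succ N ih =>
    rw [Finset.sum_range_succ]
    have key : ((qR N)^3)⁻¹ ≤ 16 * (qR (N+1) - qR N) := by
      set x := qR (N+1) with hxdef; set y := qR N with hydef
      have hy : 1 ≤ y := one_le_qR N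
      have hxy : y ≤ x := qR_mono (by omega)
      have hx2y : x ≤ 2*y := qR_succ_le N
      have h4 : x^4 = y^4 + 1 := by rw [hxdef, hydef, qR_pow4, qR_pow4]; push_cast; ring
      have hypos : (0:ℝ) < y := by linarith
      have h3 : (0:ℝ) < y^3 := by positivity
      rw [inv_eq_one_div, div_le_iff₀ h3]
      have hxpos : (0:ℝ) < x := by linarith
      have hfac : (x-y)*(x^3+x^2*y+x*y^2+y^3) = 1 := by linear_combination h4
      have hx2 : x^2 ≤ 4*y^2 := by nlinarith
      have hx3 : x^3 ≤ 8*y^3 := by nlinarith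
      have hb : x^3+x^2*y+x*y^2+y^3 ≤ 16*y^3 := by nlinarith
      have hm := mul_le_mul_of_nonneg_left hb (sub_nonneg.2 hxy)
      nlinarith [hm, hfac]
    linarith

lemma lemB : ∀ n N : ℕ, n ≤ N →
    ∑ k ∈ Finset.Ico n N, ((qR k)^5)⁻¹ ≤ 32 * ((qR n)⁻¹ - (qR N)⁻¹) := by
  intro n N hnN
  induction N, hnN using Nat.le_induction with
  | base => simp
  | succ N hnN ih =>
    rw [Finset.sum_Ico_succ_top hnN]
    have key : ((qR N)^5)⁻¹ ≤ 32 * ((qR N)⁻¹ - (qR (N+1))⁻¹) := by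
      set x := qR (N+1) with hxdef; set y := qR N with hydef
      have hy : 1 ≤ y := one_le_qR N
      have hxy : y ≤ x := qR_mono (by omega)
      have hx2y : x ≤ 2*y := qR_succ_le N
      have h4 : x^4 = y^4 + 1 := by rw [hxdef, hydef, qR_pow4, qR_pow4]; push_cast; ring
      have hypos : (0:ℝ) < y := by linarith
      have hxpos : (0:ℝ) < x := by linarith
      have hdiff : y⁻¹ - x⁻¹ = (x - y)/(y*x) := by
        rw [inv_sub_inv hypos.ne' hxpos.ne']
      rw [hdiff, mul_div_assoc', inv_eq_one_div,
        div_le_div_iff₀ (by positivity) (by positivity)]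
      have h2 : 1 ≤ 15 * (x - y) * y^3 := by
        have hfac : (x-y)*(x^3+x^2*y+x*y^2+y^3) = 1 := by linear_combination h4
        have hx2 : x^2 ≤ 4*y^2 := by nlinarith
        have hx3 : x^3 ≤ 8*y^3 := by nlinarith
        have hb : x^3+x^2*y+x*y^2+y^3 ≤ 15*y^3 := by nlinarith
        have hm := mul_le_mul_of_nonneg_left hb (sub_nonneg.2 hxy)
        nlinarith [hm, hfac]
      nlinarith [mul_le_mul hx2y h2 zero_le_one (by positivity : (0:ℝ) ≤ 2*y),
        mul_nonneg (sub_nonneg.2 hxy) (by positivity : (0:ℝ) ≤ y^5)]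
    linarith

lemma lemC {N n : ℕ} (hn : n < N) :
    ∑ k ∈ Finset.range N, min ((qR n)^2) ((qR k)^2) * ((qR k)^5)⁻¹ ≤ 48 * qR n := by
  rw [← Finset.sum_range_add_sum_Ico _ (le_of_lt hn)]
  have part1 : ∑ k ∈ Finset.range n, min ((qR n)^2) ((qR k)^2) * ((qR k)^5)⁻¹
      ≤ 16 * qR n - 16 := by
    refine le_trans (Finset.sum_le_sum fun k _ => ?_) (lemA n)
    have hq := qR_pos k
    have : min ((qR n)^2) ((qR k)^2) ≤ (qR k)^2 := min_le_right _ _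
    have h2 : min ((qR n)^2) ((qR k)^2) * ((qR k)^5)⁻¹ ≤ (qR k)^2 * ((qR k)^5)⁻¹ :=
      mul_le_mul_of_nonneg_right this (by positivity)
    have h3 : (qR k)^2 * ((qR k)^5)⁻¹ = ((qR k)^3)⁻¹ := by
      field_simp
    linarith
  have part2 : ∑ k ∈ Finset.Ico n N, min ((qR n)^2) ((qR k)^2) * ((qR k)^5)⁻¹
      ≤ 32 * qR n := by
    have h1 : ∑ k ∈ Finset.Ico n N, min ((qR n)^2) ((qR k)^2) * ((qR k)^5)⁻¹
        ≤ ∑ k ∈ Finset.Ico n N, (qR n)^2 * ((qR k)^5)⁻¹ := by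
      refine Finset.sum_le_sum fun k _ => ?_
      have hq := qR_pos k
      exact mul_le_mul_of_nonneg_right (min_le_left _ _) (by positivity)
    rw [← Finset.mul_sum] at h1
    have h2 := lemB n N (le_of_lt hn)
    have hqn := qR_pos n
    have hqN := qR_pos N
    have h3 : (qR n)^2 * ∑ k ∈ Finset.Ico n N, ((qR k)^5)⁻¹
        ≤ (qR n)^2 * (32 * ((qR n)⁻¹ - (qR N)⁻¹)) :=
      mul_le_mul_of_nonneg_left h2 (by positivity)
    have h4 : (qR n)^2 * (32 * ((qR n)⁻¹ - (qR N)⁻¹)) ≤ 32 * qR n := by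
      have h5 : (qR n)^2 * (qR n)⁻¹ = qR n := by field_simp
      have h6 : 0 ≤ (qR n)^2 * (qR N)⁻¹ := by positivity
      nlinarith
    linarith
  linarith

def sR (n : ℕ) : ℝ := Real.sqrt (Real.pi * ((n:ℝ)+1))

lemma sR_pos (n : ℕ) : 0 < sR n := Real.sqrt_pos.2 (by positivity)

lemma sR_sq (n : ℕ) : (sR n)^2 = Real.pi * ((n:ℝ)+1) := Real.sq_sqrt (by positivity)

lemma sR_eq_q (n : ℕ) : sR n = Real.sqrt Real.pi * (qR n)^2 := by
  rw [sR, qR, Real.sq_sqrt (Real.sqrt_nonneg _), Real.sqrt_mul Real.pi_pos.le]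

def Bk (n k : ℕ) : ℝ :=
  sR n * sR k * ((sR n)^2 + (sR k)^2 + sR n * sR k)
    / ((sR n + sR k) * ((sR n)^2 + (sR k)^2))

lemma Bk_nonneg (n k : ℕ) : 0 ≤ Bk n k := by
  have h1 := sR_pos n; have h2 := sR_pos k
  apply div_nonneg
  · apply mul_nonneg (mul_nonneg h1.le h2.le)
    nlinarith [sq_nonneg (sR n), sq_nonneg (sR k)]
  · apply mul_nonneg (by linarith)
    nlinarith [sq_nonneg (sR n), sq_nonneg (sR k)]

lemma Kker_eq (v : ℝ) (n k : ℕ) :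
    Kker v (n+1) (k+1) = cosB (n+1) v * cosB (k+1) v * Bk n k := by
  rw [Kker, Bk]
  have hc1 : Real.pi * ((n+1 : ℕ):ℝ) = Real.pi * ((n:ℝ)+1) := by push_cast; ring
  have hc2 : Real.pi * ((k+1 : ℕ):ℝ) = Real.pi * ((k:ℝ)+1) := by push_cast; ring
  have hc3 : Real.pi^2 * ((n+1 : ℕ):ℝ) * ((k+1 : ℕ):ℝ)
      = (Real.pi * ((n:ℝ)+1)) * (Real.pi * ((k:ℝ)+1)) := by push_cast; ring
  rw [hc1, hc2, hc3,
    Real.sqrt_mul (by positivity : (0:ℝ) ≤ Real.pi * ((n:ℝ)+1)) (Real.pi * ((k:ℝ)+1))]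
  rw [show Real.sqrt (Real.pi * ((n:ℝ)+1)) = sR n from rfl,
    show Real.sqrt (Real.pi * ((k:ℝ)+1)) = sR k from rfl, ← sR_sq, ← sR_sq]
  ring

lemma abs_cosB_le (v : ℝ) (n : ℕ) : |cosB (n+1) v| ≤ Real.sqrt 2 := by
  rw [cosB, if_neg (Nat.succ_ne_zero n), abs_mul,
    abs_of_nonneg (Real.sqrt_nonneg 2)]
  calc Real.sqrt 2 * |Real.cos (Real.pi * (↑(n+1)) * v)|
      ≤ Real.sqrt 2 * 1 := by
        exact mul_le_mul_of_nonneg_left (Real.abs_cos_le_one _) (Real.sqrt_nonneg 2)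
    _ = Real.sqrt 2 := mul_one _

lemma abs_Kker_le (v : ℝ) (n k : ℕ) : |Kker v (n+1) (k+1)| ≤ 2 * Bk n k := by
  rw [Kker_eq, abs_mul, abs_mul, abs_of_nonneg (Bk_nonneg n k)]
  have h1 := abs_cosB_le v n
  have h2 := abs_cosB_le v k
  have h3 : |cosB (n+1) v| * |cosB (k+1) v| ≤ Real.sqrt 2 * Real.sqrt 2 :=
    mul_le_mul h1 h2 (abs_nonneg _) (Real.sqrt_nonneg 2)
  have h4 : Real.sqrt 2 * Real.sqrt 2 = 2 := Real.mul_self_sqrt (by norm_num)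
  rw [h4] at h3
  exact mul_le_mul_of_nonneg_right h3 (Bk_nonneg n k)

lemma Bk_le (n k : ℕ) : Bk n k ≤ 3/2 * min (sR n) (sR k) := by
  have hs := sR_pos n; have ht := sR_pos k
  set s := sR n; set t := sR k
  have hd : 0 < (s + t) * (s^2 + t^2) := by positivity
  rw [Bk, div_le_iff₀ hd]
  rcases le_total s t with h | h
  · rw [min_eq_left h]
    nlinarith [mul_pos hs ht, sq_nonneg (s-t), sq_nonneg (s+t), mul_nonneg (mul_nonneg hs.le ht.le) (sub_nonneg.2 h)]
  · rw [min_eq_right h]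
    nlinarith [mul_pos hs ht, sq_nonneg (s-t), sq_nonneg (s+t), mul_nonneg (mul_nonneg hs.le ht.le) (sub_nonneg.2 h)]

lemma min_sR_eq (n k : ℕ) :
    min (sR n) (sR k) = Real.sqrt Real.pi * min ((qR n)^2) ((qR k)^2) := by
  rw [sR_eq_q, sR_eq_q]
  rcases le_total ((qR n)^2) ((qR k)^2) with h | h
  · rw [min_eq_left h, min_eq_left
      (mul_le_mul_of_nonneg_left h (Real.sqrt_nonneg _))]
  · rw [min_eq_right h, min_eq_right
      (mul_le_mul_of_nonneg_left h (Real.sqrt_nonneg _))]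

lemma S_nonneg (F : Finset ℕ) (b : ℕ → ℝ) :
    0 ≤ ∑ n ∈ F, ∑ k ∈ F, b n * b k * Bk n k := by
  have hsplit : ∀ n k : ℕ, b n * b k * Bk n k
      = (b n * sR n) * (b k * sR k) / (sR n + sR k)
        + (b n * b k * (sR n * sR k)^2 / ((sR n)^2 + (sR k)^2)) / (sR n + sR k) := by
    intro n k
    have h1 := sR_pos n; have h2 := sR_pos k
    have hd1 : sR n + sR k ≠ 0 := by positivity
    have hd2 : (sR n)^2 + (sR k)^2 ≠ 0 := by positivity
    rw [Bk]
    field_simp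
  have heq : ∑ n ∈ F, ∑ k ∈ F, b n * b k * Bk n k
      = (∑ n ∈ F, ∑ k ∈ F, (b n * sR n) * (b k * sR k) / (sR n + sR k))
        + ∑ n ∈ F, ∑ k ∈ F,
            (b n * b k * (sR n * sR k)^2 / ((sR n)^2 + (sR k)^2)) / (sR n + sR k) := by
    rw [← Finset.sum_add_distrib]
    refine Finset.sum_congr rfl fun n _ => ?_
    rw [← Finset.sum_add_distrib]
    exact Finset.sum_congr rfl fun k _ => hsplit n k
  rw [heq]
  have part1 : 0 ≤ ∑ n ∈ F, ∑ k ∈ F, (b n * sR n) * (b k * sR k) / (sR n + sR k) :=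
    psd_recip F (fun n => b n * sR n) sR (fun n _ => sR_pos n)
  have part2 : 0 ≤ ∑ n ∈ F, ∑ k ∈ F,
      (b n * b k * (sR n * sR k)^2 / ((sR n)^2 + (sR k)^2)) / (sR n + sR k) := by
    have hflat : ∑ n ∈ F, ∑ k ∈ F,
        (b n * b k * (sR n * sR k)^2 / ((sR n)^2 + (sR k)^2)) / (sR n + sR k)
        = ∑ p ∈ F ×ˢ F,
            (b p.1 * b p.2 * (sR p.1 * sR p.2)^2 / ((sR p.1)^2 + (sR p.2)^2))
              / (sR p.1 + sR p.2) := (Finset.sum_product' _ _ _).symm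
    rw [hflat, ← sum_exp_integral (F ×ˢ F)
      (fun p => b p.1 * b p.2 * (sR p.1 * sR p.2)^2 / ((sR p.1)^2 + (sR p.2)^2))
      (fun p => sR p.1 + sR p.2)
      (fun p _ => add_pos (sR_pos _) (sR_pos _))]
    refine MeasureTheory.setIntegral_nonneg measurableSet_Ioi fun x _ => ?_
    have hx : ∑ p ∈ F ×ˢ F,
        (b p.1 * b p.2 * (sR p.1 * sR p.2)^2 / ((sR p.1)^2 + (sR p.2)^2))
          * Real.exp (-((sR p.1 + sR p.2) * x))
        = ∑ n ∈ F, ∑ k ∈ F,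
            (b n * (sR n)^2 * Real.exp (-(sR n * x)))
              * (b k * (sR k)^2 * Real.exp (-(sR k * x))) / ((sR n)^2 + (sR k)^2) := by
      rw [← Finset.sum_product']
      refine Finset.sum_congr rfl fun p _ => ?_
      rw [show -((sR p.1 + sR p.2) * x) = -(sR p.1 * x) + -(sR p.2 * x) by ring,
        Real.exp_add]
      ring
    rw [hx]
    exact psd_recip F (fun n => b n * (sR n)^2 * Real.exp (-(sR n * x)))
      (fun n => (sR n)^2) (fun n _ => pow_pos (sR_pos n) 2)
  linarith

lemma S_bound (F : Finset ℕ) (a : ℕ → ℝ) (v : ℝ) :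
    ∑ n ∈ F, ∑ k ∈ F, Kker v (n+1) (k+1) * a (n+1) * a (k+1)
      ≤ 144 * Real.sqrt Real.pi * ∑ n ∈ F, (a (n+1))^2 * (qR n)^6 := by
  set m : ℕ → ℕ → ℝ := fun n k => min ((qR n)^2) ((qR k)^2) with hm
  set X : ℕ → ℕ → ℝ := fun n k => (qR n)^5 * ((qR k)^5)⁻¹ with hX
  have hm_nonneg : ∀ n k, 0 ≤ m n k := fun n k =>
    le_min (by positivity) (by positivity)
  have hm_comm : ∀ n k, m n k = m k n := fun n k => min_comm _ _
  -- pointwise bound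
  have step : ∀ n k : ℕ, Kker v (n+1) (k+1) * a (n+1) * a (k+1)
      ≤ 3 * Real.sqrt Real.pi / 2
          * (m n k * ((a (n+1))^2 * X n k) + m n k * ((a (k+1))^2 * X k n)) := by
    intro n k
    have h1 : Kker v (n+1) (k+1) * a (n+1) * a (k+1)
        ≤ |Kker v (n+1) (k+1)| * |a (n+1)| * |a (k+1)| := by
      calc Kker v (n+1) (k+1) * a (n+1) * a (k+1)
          ≤ |Kker v (n+1) (k+1) * a (n+1) * a (k+1)| := le_abs_self _
        _ = |Kker v (n+1) (k+1)| * |a (n+1)| * |a (k+1)| := by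
            rw [abs_mul, abs_mul]
    have h2 := abs_Kker_le v n k
    have h3 := Bk_le n k
    have h4 := min_sR_eq n k
    have hK : |Kker v (n+1) (k+1)| ≤ 3 * Real.sqrt Real.pi * m n k := by
      have : |Kker v (n+1) (k+1)| ≤ 3 * min (sR n) (sR k) := by linarith
      rw [h4] at this
      linarith
    have h5 : |Kker v (n+1) (k+1)| * |a (n+1)| * |a (k+1)|
        ≤ (3 * Real.sqrt Real.pi * m n k) * (|a (n+1)| * |a (k+1)|) := by
      rw [mul_assoc]
      exact mul_le_mul_of_nonneg_right hK (by positivity)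
    -- AM-GM
    have hp : (0:ℝ) < (qR n)^5 := pow_pos (qR_pos n) 5
    have hq : (0:ℝ) < (qR k)^5 := pow_pos (qR_pos k) 5
    set u := |a (n+1)|; set w := |a (k+1)|
    have hu : u^2 = (a (n+1))^2 := sq_abs _
    have hw : w^2 = (a (k+1))^2 := sq_abs _
    have key : 2*(u*w)*((qR n)^5*(qR k)^5) ≤ u^2*((qR n)^5)^2 + w^2*((qR k)^5)^2 := by
      nlinarith [sq_nonneg (u*(qR n)^5 - w*(qR k)^5)]
    have amgm : u * w ≤ (u^2 * X n k + w^2 * X k n)/2 := by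
      have hrw : (u^2 * X n k + w^2 * X k n)/2
          = (u^2*((qR n)^5)^2 + w^2*((qR k)^5)^2) / (2*((qR n)^5*(qR k)^5)) := by
        rw [hX]
        field_simp
      rw [hrw, le_div_iff₀ (by positivity)]
      linarith
    have h6 : (3 * Real.sqrt Real.pi * m n k) * (u * w)
        ≤ (3 * Real.sqrt Real.pi * m n k) * ((u^2 * X n k + w^2 * X k n)/2) :=
      mul_le_mul_of_nonneg_left amgm
        (mul_nonneg (by positivity) (hm_nonneg n k))
    calc Kker v (n+1) (k+1) * a (n+1) * a (k+1)
        ≤ (3 * Real.sqrt Real.pi * m n k) * (u * w) := by linarith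
      _ ≤ (3 * Real.sqrt Real.pi * m n k) * ((u^2 * X n k + w^2 * X k n)/2) := h6
      _ = 3 * Real.sqrt Real.pi / 2
          * (m n k * ((a (n+1))^2 * X n k) + m n k * ((a (k+1))^2 * X k n)) := by
          rw [← hu, ← hw]; ring
  obtain ⟨N, hFN⟩ := Finset.exists_nat_subset_range F
  have inner_bound : ∀ n ∈ F, ∑ k ∈ F, m n k * ((qR k)^5)⁻¹ ≤ 48 * qR n := by
    intro n hn
    have hnN : n < N := Finset.mem_range.1 (hFN hn)
    calc ∑ k ∈ F, m n k * ((qR k)^5)⁻¹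
        ≤ ∑ k ∈ Finset.range N, m n k * ((qR k)^5)⁻¹ := by
          refine Finset.sum_le_sum_of_subset_of_nonneg hFN fun k _ _ => ?_
          exact mul_nonneg (hm_nonneg n k) (inv_nonneg.2 (pow_pos (qR_pos k) 5).le)
      _ ≤ 48 * qR n := lemC hnN
  calc ∑ n ∈ F, ∑ k ∈ F, Kker v (n+1) (k+1) * a (n+1) * a (k+1)
      ≤ ∑ n ∈ F, ∑ k ∈ F, 3 * Real.sqrt Real.pi / 2
          * (m n k * ((a (n+1))^2 * X n k) + m n k * ((a (k+1))^2 * X k n)) :=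
        Finset.sum_le_sum fun n _ => Finset.sum_le_sum fun k _ => step n k
    _ = 3 * Real.sqrt Real.pi / 2 *
          ((∑ n ∈ F, ∑ k ∈ F, m n k * ((a (n+1))^2 * X n k))
            + ∑ n ∈ F, ∑ k ∈ F, m n k * ((a (k+1))^2 * X k n)) := by
        rw [mul_add, Finset.mul_sum, Finset.mul_sum, ← Finset.sum_add_distrib]
        refine Finset.sum_congr rfl fun n _ => ?_
        rw [Finset.mul_sum, Finset.mul_sum, ← Finset.sum_add_distrib]
        exact Finset.sum_congr rfl fun k _ => by rw [mul_add]
    _ = 3 * Real.sqrt Real.pi *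
          (∑ n ∈ F, ∑ k ∈ F, m n k * ((a (n+1))^2 * X n k)) := by
        have swap : ∑ n ∈ F, ∑ k ∈ F, m n k * ((a (k+1))^2 * X k n)
            = ∑ n ∈ F, ∑ k ∈ F, m n k * ((a (n+1))^2 * X n k) := by
          rw [Finset.sum_comm]
          exact Finset.sum_congr rfl fun k _ => Finset.sum_congr rfl fun n _ => by
            rw [hm_comm]
        rw [swap]
        ring
    _ = 3 * Real.sqrt Real.pi *
          ∑ n ∈ F, (a (n+1))^2 * (qR n)^5 * ∑ k ∈ F, m n k * ((qR k)^5)⁻¹ := by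
        congr 1
        refine Finset.sum_congr rfl fun n _ => ?_
        rw [Finset.mul_sum]
        refine Finset.sum_congr rfl fun k _ => ?_
        rw [hX]
        ring
    _ ≤ 3 * Real.sqrt Real.pi *
          ∑ n ∈ F, (a (n+1))^2 * (qR n)^5 * (48 * qR n) := by
        refine mul_le_mul_of_nonneg_left (Finset.sum_le_sum fun n hn => ?_) (by positivity)
        exact mul_le_mul_of_nonneg_left (inner_bound n hn)
          (mul_nonneg (sq_nonneg _) (pow_pos (qR_pos n) 5).le)
    _ = 144 * Real.sqrt Real.pi * ∑ n ∈ F, (a (n+1))^2 * (qR n)^6 := by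
        rw [Finset.mul_sum, Finset.mul_sum]
        refine Finset.sum_congr rfl fun n _ => ?_
        ring

lemma weight_eq (n : ℕ) :
    (Real.pi * ((n:ℝ)+1)) ^ ((3:ℝ)/2)
      = Real.pi * Real.sqrt Real.pi * (qR n)^6 := by
  have hx : (0:ℝ) < Real.pi * ((n:ℝ)+1) := by positivity
  have hq2 : (qR n)^2 = Real.sqrt ((n:ℝ)+1) := Real.sq_sqrt (Real.sqrt_nonneg _)
  have hq6 : (qR n)^6 = ((n:ℝ)+1) * Real.sqrt ((n:ℝ)+1) := by
    have : (qR n)^6 = ((qR n)^2)^3 := by ring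
    rw [this, hq2, pow_succ, pow_two,
      Real.mul_self_sqrt (by positivity : (0:ℝ) ≤ (n:ℝ)+1)]
  rw [show (3:ℝ)/2 = 1 + 1/2 by norm_num, Real.rpow_add hx, Real.rpow_one,
    ← Real.sqrt_eq_rpow, Real.sqrt_mul Real.pi_pos.le, hq6]
  ring


/-- The quadratic form `ℰ_K` is nonnegative and bounded by the
`H^{3/4}` seminorm of the sequence. -/
theorem Kform_nonneg_and_bounded :
    ∃ C > (0:ℝ), ∀ a : ℕ → ℝ, (Function.support a).Finite →
      0 ≤ Kform a
      ∧ Kform a ≤ C * ∑' ℓ : ℕ, (Real.pi * ((ℓ : ℝ) + 1)) ^ ((3:ℝ)/2) * (a (ℓ + 1)) ^ 2 := by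
  refine ⟨144, by norm_num, fun a hfin => ?_⟩
  classical
  set F : Finset ℕ := hfin.toFinset.image Nat.pred with hF
  have hmemF : ∀ n : ℕ, a (n+1) ≠ 0 → n ∈ F := by
    intro n hn
    rw [hF, Finset.mem_image]
    exact ⟨n+1, by simpa using hn, rfl⟩
  have hsupp : ∀ (v : ℝ) (q : ℕ × ℕ), q ∉ F ×ˢ F →
      Kker v (q.1+1) (q.2+1) * a (q.1+1) * a (q.2+1) = 0 := by
    intro v q hq
    rw [Finset.mem_product] at hq
    push_neg at hq
    by_cases h1 : q.1 ∈ F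
    · have h2 := hq h1
      have : a (q.2+1) = 0 := by
        by_contra h
        exact h2 (hmemF _ h)
      rw [this, mul_zero]
    · have : a (q.1+1) = 0 := by
        by_contra h
        exact h1 (hmemF _ h)
      rw [this, mul_zero, zero_mul]
  have ht : ∀ v : ℝ, (∑' q : ℕ × ℕ, Kker v (q.1+1) (q.2+1) * a (q.1+1) * a (q.2+1))
      = ∑ n ∈ F, ∑ k ∈ F, Kker v (n+1) (k+1) * a (n+1) * a (k+1) := by
    intro v
    rw [tsum_eq_sum (hsupp v), Finset.sum_product]
  have hRHS : (∑' ℓ : ℕ, (Real.pi * ((ℓ : ℝ) + 1)) ^ ((3:ℝ)/2) * (a (ℓ + 1)) ^ 2)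
      = ∑ n ∈ F, (Real.pi * ((n : ℝ) + 1)) ^ ((3:ℝ)/2) * (a (n + 1)) ^ 2 := by
    refine tsum_eq_sum fun n hn => ?_
    have : a (n+1) = 0 := by
      by_contra h
      exact hn (hmemF _ h)
    rw [this]
    ring
  have hKform : Kform a = Real.pi / (2:ℝ) ^ ((3:ℝ)/2) *
      ((∑ n ∈ F, ∑ k ∈ F, Kker 0 (n+1) (k+1) * a (n+1) * a (k+1))
        + ∑ n ∈ F, ∑ k ∈ F, Kker 1 (n+1) (k+1) * a (n+1) * a (k+1)) := by
    rw [Kform, ht 0, ht 1]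
  have hc_pos : (0:ℝ) < Real.pi / (2:ℝ) ^ ((3:ℝ)/2) := by positivity
  have hSv : ∀ v : ℝ, 0 ≤ ∑ n ∈ F, ∑ k ∈ F, Kker v (n+1) (k+1) * a (n+1) * a (k+1) := by
    intro v
    have heq : ∑ n ∈ F, ∑ k ∈ F, Kker v (n+1) (k+1) * a (n+1) * a (k+1)
        = ∑ n ∈ F, ∑ k ∈ F,
            (cosB (n+1) v * a (n+1)) * (cosB (k+1) v * a (k+1)) * Bk n k := by
      refine Finset.sum_congr rfl fun n _ => Finset.sum_congr rfl fun k _ => ?_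
      rw [Kker_eq]
      ring
    rw [heq]
    exact S_nonneg F (fun n => cosB (n+1) v * a (n+1))
  constructor
  · rw [hKform]
    exact mul_nonneg hc_pos.le (add_nonneg (hSv 0) (hSv 1))
  · rw [hKform, hRHS]
    set Sig6 := ∑ n ∈ F, (a (n+1))^2 * (qR n)^6 with hSig6
    have hSig6nn : 0 ≤ Sig6 :=
      Finset.sum_nonneg fun n _ => mul_nonneg (sq_nonneg _) (by positivity)
    have hboth : (∑ n ∈ F, ∑ k ∈ F, Kker 0 (n+1) (k+1) * a (n+1) * a (k+1))
        + ∑ n ∈ F, ∑ k ∈ F, Kker 1 (n+1) (k+1) * a (n+1) * a (k+1)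
        ≤ 288 * Real.sqrt Real.pi * Sig6 := by
      have h0 := S_bound F a 0
      have h1 := S_bound F a 1
      rw [← hSig6] at h0 h1
      linarith
    have hcle : Real.pi / (2:ℝ) ^ ((3:ℝ)/2) ≤ Real.pi / 2 := by
      have h2 : (2:ℝ) ≤ (2:ℝ) ^ ((3:ℝ)/2) := by
        have := Real.rpow_le_rpow_of_exponent_le (by norm_num : (1:ℝ) ≤ 2)
          (by norm_num : (1:ℝ) ≤ (3:ℝ)/2)
        rwa [Real.rpow_one] at this
      exact div_le_div_of_nonneg_left Real.pi_pos.le (by norm_num) h2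
    calc Real.pi / (2:ℝ) ^ ((3:ℝ)/2) *
        ((∑ n ∈ F, ∑ k ∈ F, Kker 0 (n+1) (k+1) * a (n+1) * a (k+1))
          + ∑ n ∈ F, ∑ k ∈ F, Kker 1 (n+1) (k+1) * a (n+1) * a (k+1))
        ≤ Real.pi / (2:ℝ) ^ ((3:ℝ)/2) * (288 * Real.sqrt Real.pi * Sig6) :=
          mul_le_mul_of_nonneg_left hboth hc_pos.le
      _ ≤ Real.pi / 2 * (288 * Real.sqrt Real.pi * Sig6) := by
          refine mul_le_mul_of_nonneg_right hcle ?_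
          positivity
      _ = 144 * ∑ n ∈ F, (Real.pi * ((n : ℝ) + 1)) ^ ((3:ℝ)/2) * (a (n + 1)) ^ 2 := by
          rw [hSig6]
          simp only [Finset.mul_sum]
          refine Finset.sum_congr rfl fun n _ => ?_
          rw [weight_eq]
          ring
end
end

section
/- Let α, β > 0 satisfy α + 2β = 1. Then there exists a constant C > 0 such that for every f ∈ L²(0,∞): the double integral ∬_{(0,∞)²} |f(x)|·|f(y)| / ((x^α + y^α)·x^β·y^β) dx dy is finite, and 0 ≤ ∬_{(0,∞)²} f(x)·f(y) / ((x^α + y^α)·x^β·y^β) dx dy ≤ C·∫₀^∞ f(x)² dx. -/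
open MeasureTheory Real Filter Set
open scoped ENNReal
noncomputable section

private lemma lint_scale {F : ℝ → ℝ≥0∞} (hF : Measurable F) {x : ℝ} (hx : 0 < x) :
    ∫⁻ t in Ioi (0:ℝ), F (x * t) = ENNReal.ofReal x⁻¹ * ∫⁻ y in Ioi (0:ℝ), F y := by
  have hpre : (fun t : ℝ => x * t) ⁻¹' Ioi 0 = Ioi 0 := by
    ext t
    simp only [Set.mem_preimage, Set.mem_Ioi]
    exact ⟨fun h => by nlinarith, fun h => mul_pos hx h⟩
  have hmap : Measure.map (fun t : ℝ => x * t) (volume.restrict (Ioi 0))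
      = ENNReal.ofReal x⁻¹ • volume.restrict (Ioi (0:ℝ)) := by
    conv_lhs => rw [← hpre]
    rw [← Measure.restrict_map (measurable_const_mul x) measurableSet_Ioi,
      Real.map_volume_mul_left hx.ne', Measure.restrict_smul, abs_inv, abs_of_pos hx]
  calc ∫⁻ t in Ioi (0:ℝ), F (x * t)
      = ∫⁻ y, F y ∂(Measure.map (fun t : ℝ => x*t) (volume.restrict (Ioi 0))) :=
        (lintegral_map hF (measurable_const_mul x)).symm
    _ = _ := by rw [hmap, lintegral_smul_measure, smul_eq_mul]

private lemma phi_meas {α β : ℝ} : Measurable (fun t : ℝ => t ^ (-β - 2⁻¹) / (1 + t ^ α)) := by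
  fun_prop

private lemma phi_integrable {α β : ℝ} (hα : 0 < α) (hβ : 0 < β) (hβ' : β < 2⁻¹)
    (hαβ : α + 2 * β = 1) :
    IntegrableOn (fun t : ℝ => t ^ (-β - 2⁻¹) / (1 + t ^ α)) (Ioi (0:ℝ)) := by
  have h1 : IntegrableOn (fun t : ℝ => t ^ (-β - 2⁻¹) / (1 + t ^ α)) (Ioc (0:ℝ) 1) := by
    have hd : IntegrableOn (fun t : ℝ => t ^ (-β - 2⁻¹)) (Ioc (0:ℝ) 1) := by
      refine ((intervalIntegral.integrableOn_Ioo_rpow_iff one_pos).2 (by linarith)).congr_set_ae ?_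
      exact Ioo_ae_eq_Ioc.symm
    refine Integrable.mono hd (phi_meas.aestronglyMeasurable.restrict) ?_
    filter_upwards [ae_restrict_mem measurableSet_Ioc] with t ht
    have ht0 : 0 < t := ht.1
    have h1t : (1:ℝ) ≤ 1 + t ^ α := by
      have := rpow_pos_of_pos ht0 α
      linarith
    rw [norm_div, Real.norm_eq_abs, Real.norm_eq_abs,
      abs_of_pos (by positivity : (0:ℝ) < 1 + t ^ α),
      abs_of_pos (rpow_pos_of_pos ht0 _)]
    calc t ^ (-β - 2⁻¹) / (1 + t ^ α) ≤ t ^ (-β - 2⁻¹) / 1 :=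
          div_le_div_of_nonneg_left (rpow_pos_of_pos ht0 _).le one_pos h1t
      _ = t ^ (-β - 2⁻¹) := div_one _
  have h2 : IntegrableOn (fun t : ℝ => t ^ (-β - 2⁻¹) / (1 + t ^ α)) (Ioi (1:ℝ)) := by
    have hd : IntegrableOn (fun t : ℝ => t ^ (-β - 2⁻¹ - α)) (Ioi (1:ℝ)) := by
      refine (integrableOn_Ioi_rpow_iff one_pos).2 (by linarith)
    refine Integrable.mono hd (phi_meas.aestronglyMeasurable.restrict) ?_
    filter_upwards [ae_restrict_mem measurableSet_Ioi] with t ht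
    have ht0 : (0:ℝ) < t := lt_trans one_pos ht
    have hta : 0 < t ^ α := rpow_pos_of_pos ht0 α
    rw [norm_div, Real.norm_eq_abs, Real.norm_eq_abs,
      abs_of_pos (by positivity : (0:ℝ) < 1 + t ^ α),
      abs_of_pos (rpow_pos_of_pos ht0 _), Real.norm_eq_abs,
      abs_of_pos (rpow_pos_of_pos ht0 _)]
    calc t ^ (-β - 2⁻¹) / (1 + t ^ α) ≤ t ^ (-β - 2⁻¹) / t ^ α :=
          div_le_div_of_nonneg_left (rpow_pos_of_pos ht0 _).le hta (by linarith)
      _ = t ^ (-β - 2⁻¹ - α) := by rw [← Real.rpow_sub ht0]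
  have := h1.union h2
  rwa [Ioc_union_Ioi_eq_Ioi (zero_le_one)] at this

private lemma phi_int_pos {α β : ℝ} (hα : 0 < α) (hβ : 0 < β) (hβ' : β < 2⁻¹)
    (hαβ : α + 2 * β = 1) :
    0 < ∫ t in Ioi (0:ℝ), t ^ (-β - 2⁻¹) / (1 + t ^ α) := by
  have hpos : ∀ t ∈ Ioi (0:ℝ), 0 < t ^ (-β - 2⁻¹) / (1 + t ^ α) := fun t ht => by
    have : (0:ℝ) < t := ht
    positivity
  rw [setIntegral_pos_iff_support_of_nonneg_ae ?_ (phi_integrable hα hβ hβ' hαβ)]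
  · exact lt_of_lt_of_le (by simp : (0:ℝ≥0∞) < volume (Ioi (0:ℝ)))
      (measure_mono fun t ht => ⟨(hpos t ht).ne', ht⟩)
  · filter_upwards [ae_restrict_mem measurableSet_Ioi] with t ht
    exact (hpos t ht).le

private lemma kernel_algebra {α β : ℝ} (hα : 0 < α) (hβ : 0 < β) (hαβ : α + 2 * β = 1)
    {x t : ℝ} (hx : 0 < x) (ht : 0 < t) :
    (x*t) ^ (-(2:ℝ)⁻¹) * ((x ^ α + (x*t) ^ α) * x ^ β * (x*t) ^ β)⁻¹
      = x ^ (-(3:ℝ)/2) * (t ^ (-β - 2⁻¹) / (1 + t ^ α)) := by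
  rw [Real.mul_rpow hx.le ht.le, Real.mul_rpow hx.le ht.le, Real.mul_rpow hx.le ht.le]
  have e1 : x ^ α * x ^ β * x ^ β = x := by
    rw [← Real.rpow_add hx, ← Real.rpow_add hx, show α + β + β = 1 by linarith, Real.rpow_one]
  have e2 : x ^ (-(3:ℝ)/2) = x ^ (-(2:ℝ)⁻¹) * x⁻¹ := by
    rw [← Real.rpow_neg_one x, ← Real.rpow_add hx]; norm_num
  have e3 : t ^ (-β - 2⁻¹) = t ^ (-(2:ℝ)⁻¹) * (t ^ β)⁻¹ := by
    rw [← Real.rpow_neg ht.le, ← Real.rpow_add ht]; congr 1; ring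
  have h4 : x ^ α + x ^ α * t ^ α = x ^ α * (1 + t ^ α) := by ring
  rw [h4, e2, e3]
  have h5 : x ^ α * (1 + t ^ α) * x ^ β * (x ^ β * t ^ β)
      = x * ((1 + t ^ α) * t ^ β) := by
    calc x ^ α * (1 + t ^ α) * x ^ β * (x ^ β * t ^ β)
        = (x ^ α * x ^ β * x ^ β) * ((1 + t ^ α) * t ^ β) := by ring
      _ = x * ((1 + t ^ α) * t ^ β) := by rw [e1]
  rw [h5, mul_inv, mul_inv, div_eq_mul_inv]
  ring

private lemma inner_lint {α β : ℝ} (hα : 0 < α) (hβ : 0 < β) (hαβ : α + 2 * β = 1)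
    {x : ℝ} (hx : 0 < x) :
    ∫⁻ y in Ioi (0:ℝ),
        ENNReal.ofReal (y ^ (-(2:ℝ)⁻¹) * ((x ^ α + y ^ α) * x ^ β * y ^ β)⁻¹)
      = ENNReal.ofReal (x ^ (-(2:ℝ)⁻¹))
        * ENNReal.ofReal (∫ t in Ioi (0:ℝ), t ^ (-β - 2⁻¹) / (1 + t ^ α)) := by
  have hβ' : β < 2⁻¹ := by linarith
  have hF : Measurable (fun y : ℝ =>
      ENNReal.ofReal (y ^ (-(2:ℝ)⁻¹) * ((x ^ α + y ^ α) * x ^ β * y ^ β)⁻¹)) := by fun_prop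
  have hsc := lint_scale hF hx
  have hphi : ENNReal.ofReal (∫ t in Ioi (0:ℝ), t ^ (-β - 2⁻¹) / (1 + t ^ α))
      = ∫⁻ t in Ioi (0:ℝ), ENNReal.ofReal (t ^ (-β - 2⁻¹) / (1 + t ^ α)) := by
    refine ofReal_integral_eq_lintegral_ofReal (phi_integrable hα hβ hβ' hαβ) ?_
    filter_upwards [ae_restrict_mem measurableSet_Ioi] with t (ht : 0 < t)
    positivity
  have key : (∫⁻ t in Ioi (0:ℝ),
      ENNReal.ofReal ((x*t) ^ (-(2:ℝ)⁻¹) * ((x ^ α + (x*t) ^ α) * x ^ β * (x*t) ^ β)⁻¹))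
      = ENNReal.ofReal (x ^ (-(3:ℝ)/2))
        * ∫⁻ t in Ioi (0:ℝ), ENNReal.ofReal (t ^ (-β - 2⁻¹) / (1 + t ^ α)) := by
    rw [← lintegral_const_mul' _ _ ENNReal.ofReal_ne_top]
    refine setLIntegral_congr_fun measurableSet_Ioi (fun t (ht : 0 < t) => ?_)
    rw [kernel_algebra hα hβ hαβ hx ht, ENNReal.ofReal_mul (by positivity)]
  have hx1 : ENNReal.ofReal x * ENNReal.ofReal x⁻¹ = 1 := by
    rw [← ENNReal.ofReal_mul hx.le, mul_inv_cancel₀ hx.ne', ENNReal.ofReal_one]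
  calc ∫⁻ y in Ioi (0:ℝ),
      ENNReal.ofReal (y ^ (-(2:ℝ)⁻¹) * ((x ^ α + y ^ α) * x ^ β * y ^ β)⁻¹)
      = ENNReal.ofReal x * (ENNReal.ofReal x⁻¹ * ∫⁻ y in Ioi (0:ℝ),
          ENNReal.ofReal (y ^ (-(2:ℝ)⁻¹) * ((x ^ α + y ^ α) * x ^ β * y ^ β)⁻¹)) := by
        rw [← mul_assoc, hx1, one_mul]
    _ = ENNReal.ofReal x * ∫⁻ t in Ioi (0:ℝ),
          ENNReal.ofReal ((x*t) ^ (-(2:ℝ)⁻¹) * ((x ^ α + (x*t) ^ α) * x ^ β * (x*t) ^ β)⁻¹) := by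
        rw [← hsc]
    _ = _ := by
        rw [key, ← mul_assoc, ← ENNReal.ofReal_mul hx.le, hphi,
          ← Real.rpow_one_add' hx.le (by norm_num : (1:ℝ) + -3/2 ≠ 0)]
        norm_num

private lemma amgm_pt {s t u v K : ℝ} (huv : u * v = 1) (hK : 0 ≤ K) :
    |s| * |t| * K ≤ 2⁻¹ * (s ^ 2 * u ^ 2 * K) + 2⁻¹ * (t ^ 2 * v ^ 2 * K) := by
  have e : |s| * u * (|t| * v) = |s| * |t| := by
    calc |s| * u * (|t| * v) = |s| * |t| * (u * v) := by ring
      _ = |s| * |t| := by rw [huv, mul_one]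
  have h1 : |s| * |t| ≤ 2⁻¹ * (s ^ 2 * u ^ 2 + t ^ 2 * v ^ 2) := by
    nlinarith [sq_nonneg (|s| * u - |t| * v), sq_abs s, sq_abs t, e]
  nlinarith [mul_le_mul_of_nonneg_right h1 hK]

private lemma prod_pow_half {x y : ℝ} (hx : 0 < x) (hy : 0 < y) :
    (x ^ ((4:ℝ)⁻¹) * y ^ (-(4:ℝ)⁻¹)) ^ 2 = x ^ ((2:ℝ)⁻¹) * y ^ (-(2:ℝ)⁻¹) := by
  rw [mul_pow, ← Real.rpow_natCast (x ^ ((4:ℝ)⁻¹)) 2, ← Real.rpow_natCast (y ^ (-(4:ℝ)⁻¹)) 2,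
    ← Real.rpow_mul hx.le, ← Real.rpow_mul hy.le]
  norm_num

private lemma ker_nonneg {α β x y : ℝ} (hx : 0 < x) (hy : 0 < y) :
    0 ≤ ((x ^ α + y ^ α) * x ^ β * y ^ β)⁻¹ := by
  have h1 : 0 < x ^ α := Real.rpow_pos_of_pos hx α
  have h2 : 0 < y ^ α := Real.rpow_pos_of_pos hy α
  have h3 : 0 < x ^ β := Real.rpow_pos_of_pos hx β
  have h4 : 0 < y ^ β := Real.rpow_pos_of_pos hy β
  positivity

private lemma ker_pos {α β x y : ℝ} (hx : 0 < x) (hy : 0 < y) :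
    0 < (x ^ α + y ^ α) * x ^ β * y ^ β := by
  have h1 : 0 < x ^ α := Real.rpow_pos_of_pos hx α
  have h2 : 0 < y ^ α := Real.rpow_pos_of_pos hy α
  have h3 : 0 < x ^ β := Real.rpow_pos_of_pos hx β
  have h4 : 0 < y ^ β := Real.rpow_pos_of_pos hy β
  positivity

private lemma schur_bound {α β : ℝ} (hα : 0 < α) (hβ : 0 < β) (hαβ : α + 2 * β = 1)
    {g : ℝ → ℝ} (hg : Measurable g) :
    ∫⁻ p in Ioi (0:ℝ) ×ˢ Ioi (0:ℝ),
        ENNReal.ofReal (|g p.1| * |g p.2| * ((p.1 ^ α + p.2 ^ α) * p.1 ^ β * p.2 ^ β)⁻¹)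
      ≤ ENNReal.ofReal (∫ t in Ioi (0:ℝ), t ^ (-β - 2⁻¹) / (1 + t ^ α))
        * ∫⁻ x in Ioi (0:ℝ), ENNReal.ofReal (g x ^ 2) := by
  obtain ⟨C0, hC0⟩ : ∃ C0 : ℝ≥0∞,
      C0 = ENNReal.ofReal (∫ t in Ioi (0:ℝ), t ^ (-β - 2⁻¹) / (1 + t ^ α)) := ⟨_, rfl⟩
  obtain ⟨A, hA⟩ : ∃ A : ℝ × ℝ → ℝ, A = fun p =>
      (g p.1 ^ 2 * p.1 ^ ((2:ℝ)⁻¹))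
        * (p.2 ^ (-(2:ℝ)⁻¹) * ((p.1 ^ α + p.2 ^ α) * p.1 ^ β * p.2 ^ β)⁻¹) := ⟨_, rfl⟩
  obtain ⟨B, hB⟩ : ∃ B : ℝ × ℝ → ℝ, B = fun p =>
      (g p.2 ^ 2 * p.2 ^ ((2:ℝ)⁻¹))
        * (p.1 ^ (-(2:ℝ)⁻¹) * ((p.1 ^ α + p.2 ^ α) * p.1 ^ β * p.2 ^ β)⁻¹) := ⟨_, rfl⟩
  have hAmeas : Measurable fun p : ℝ × ℝ => ENNReal.ofReal (A p) := by
    rw [hA]; fun_prop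
  have hBmeas : Measurable fun p : ℝ × ℝ => ENNReal.ofReal (B p) := by
    rw [hB]; fun_prop
  have hprod : volume.restrict (Ioi (0:ℝ) ×ˢ Ioi (0:ℝ))
      = (volume.restrict (Ioi (0:ℝ))).prod (volume.restrict (Ioi (0:ℝ))) := by
    rw [Measure.prod_restrict, ← Measure.volume_eq_prod]
  have step1 : ∫⁻ p in Ioi (0:ℝ) ×ˢ Ioi (0:ℝ),
      ENNReal.ofReal (|g p.1| * |g p.2| * ((p.1 ^ α + p.2 ^ α) * p.1 ^ β * p.2 ^ β)⁻¹)
      ≤ ∫⁻ p in Ioi (0:ℝ) ×ˢ Ioi (0:ℝ),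
        (ENNReal.ofReal 2⁻¹ * ENNReal.ofReal (A p) + ENNReal.ofReal 2⁻¹ * ENNReal.ofReal (B p)) := by
    refine lintegral_mono_ae ?_
    filter_upwards [ae_restrict_mem (measurableSet_Ioi.prod measurableSet_Ioi)] with p hp
    have hx : (0:ℝ) < p.1 := hp.1
    have hy : (0:ℝ) < p.2 := hp.2
    have hK : (0:ℝ) ≤ ((p.1 ^ α + p.2 ^ α) * p.1 ^ β * p.2 ^ β)⁻¹ := ker_nonneg hx hy
    have huv : (p.1 ^ ((4:ℝ)⁻¹) * p.2 ^ (-(4:ℝ)⁻¹)) * (p.2 ^ ((4:ℝ)⁻¹) * p.1 ^ (-(4:ℝ)⁻¹)) = 1 := by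
      rw [show (p.1 ^ ((4:ℝ)⁻¹) * p.2 ^ (-(4:ℝ)⁻¹)) * (p.2 ^ ((4:ℝ)⁻¹) * p.1 ^ (-(4:ℝ)⁻¹))
          = (p.1 ^ ((4:ℝ)⁻¹) * p.1 ^ (-(4:ℝ)⁻¹)) * (p.2 ^ ((4:ℝ)⁻¹) * p.2 ^ (-(4:ℝ)⁻¹)) by ring,
        ← Real.rpow_add hx, ← Real.rpow_add hy]
      norm_num
    have hpt := amgm_pt (s := g p.1) (t := g p.2) huv hK
    rw [prod_pow_half hx hy, prod_pow_half hy hx] at hpt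
    have hA0 : 0 ≤ A p := by
      rw [hA]
      exact mul_nonneg (mul_nonneg (sq_nonneg _) (Real.rpow_nonneg hx.le _))
        (mul_nonneg (Real.rpow_nonneg hy.le _) hK)
    have hB0 : 0 ≤ B p := by
      rw [hB]
      exact mul_nonneg (mul_nonneg (sq_nonneg _) (Real.rpow_nonneg hy.le _))
        (mul_nonneg (Real.rpow_nonneg hx.le _) hK)
    calc ENNReal.ofReal (|g p.1| * |g p.2| * ((p.1 ^ α + p.2 ^ α) * p.1 ^ β * p.2 ^ β)⁻¹)
        ≤ ENNReal.ofReal (2⁻¹ * A p + 2⁻¹ * B p) := by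
          refine ENNReal.ofReal_le_ofReal ?_
          calc |g p.1| * |g p.2| * ((p.1 ^ α + p.2 ^ α) * p.1 ^ β * p.2 ^ β)⁻¹ ≤ _ := hpt
            _ = 2⁻¹ * A p + 2⁻¹ * B p := by rw [hA, hB]; ring
      _ = ENNReal.ofReal 2⁻¹ * ENNReal.ofReal (A p) + ENNReal.ofReal 2⁻¹ * ENNReal.ofReal (B p) := by
          rw [ENNReal.ofReal_add (mul_nonneg (by norm_num) hA0) (mul_nonneg (by norm_num) hB0),
            ENNReal.ofReal_mul (by norm_num : (0:ℝ) ≤ 2⁻¹),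
            ENNReal.ofReal_mul (by norm_num : (0:ℝ) ≤ 2⁻¹)]
  have hIA : ∫⁻ p in Ioi (0:ℝ) ×ˢ Ioi (0:ℝ), ENNReal.ofReal (A p)
      = C0 * ∫⁻ x in Ioi (0:ℝ), ENNReal.ofReal (g x ^ 2) := by
    rw [hprod, MeasureTheory.lintegral_prod _ hAmeas.aemeasurable]
    have hae : ∀ᵐ x ∂(volume.restrict (Ioi (0:ℝ))),
        (∫⁻ y in Ioi (0:ℝ), ENNReal.ofReal (A (x, y))) = ENNReal.ofReal (g x ^ 2) * C0 := by
      filter_upwards [ae_restrict_mem measurableSet_Ioi] with x (hx : 0 < x)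
      have hptw : ∀ y : ℝ, ENNReal.ofReal (A (x, y))
          = ENNReal.ofReal (g x ^ 2 * x ^ ((2:ℝ)⁻¹))
            * ENNReal.ofReal (y ^ (-(2:ℝ)⁻¹) * ((x ^ α + y ^ α) * x ^ β * y ^ β)⁻¹) := fun y => by
        simp only [hA]
        rw [← ENNReal.ofReal_mul (mul_nonneg (sq_nonneg _) (Real.rpow_nonneg hx.le _))]
      simp only [hptw]
      rw [lintegral_const_mul' _ _ ENNReal.ofReal_ne_top, inner_lint hα hβ hαβ hx, ← mul_assoc,
        ← ENNReal.ofReal_mul (mul_nonneg (sq_nonneg _) (Real.rpow_nonneg hx.le _)),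
        mul_assoc (g x ^ 2), ← Real.rpow_add hx, ← hC0]
      norm_num
    rw [lintegral_congr_ae hae, lintegral_mul_const' _ _ (hC0 ▸ ENNReal.ofReal_ne_top)]
    exact mul_comm _ _
  have hIB : ∫⁻ p in Ioi (0:ℝ) ×ˢ Ioi (0:ℝ), ENNReal.ofReal (B p)
      = C0 * ∫⁻ x in Ioi (0:ℝ), ENNReal.ofReal (g x ^ 2) := by
    rw [hprod, MeasureTheory.lintegral_prod_symm _ hBmeas.aemeasurable]
    have hae : ∀ᵐ y ∂(volume.restrict (Ioi (0:ℝ))),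
        (∫⁻ x in Ioi (0:ℝ), ENNReal.ofReal (B (x, y))) = ENNReal.ofReal (g y ^ 2) * C0 := by
      filter_upwards [ae_restrict_mem measurableSet_Ioi] with y (hy : 0 < y)
      have hptw : ∀ x : ℝ, ENNReal.ofReal (B (x, y))
          = ENNReal.ofReal (g y ^ 2 * y ^ ((2:ℝ)⁻¹))
            * ENNReal.ofReal (x ^ (-(2:ℝ)⁻¹) * ((y ^ α + x ^ α) * y ^ β * x ^ β)⁻¹) := fun x => by
        simp only [hB]
        rw [show (x ^ α + y ^ α) * x ^ β * y ^ β = (y ^ α + x ^ α) * y ^ β * x ^ β by ring,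
          ← ENNReal.ofReal_mul (mul_nonneg (sq_nonneg _) (Real.rpow_nonneg hy.le _))]
      simp only [hptw]
      rw [lintegral_const_mul' _ _ ENNReal.ofReal_ne_top, inner_lint hα hβ hαβ hy, ← mul_assoc,
        ← ENNReal.ofReal_mul (mul_nonneg (sq_nonneg _) (Real.rpow_nonneg hy.le _)),
        mul_assoc (g y ^ 2), ← Real.rpow_add hy, ← hC0]
      norm_num
    rw [lintegral_congr_ae hae, lintegral_mul_const' _ _ (hC0 ▸ ENNReal.ofReal_ne_top)]
    exact mul_comm _ _
  refine le_trans step1 ?_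
  rw [lintegral_add_left (hAmeas.const_mul _),
    lintegral_const_mul' _ _ ENNReal.ofReal_ne_top, lintegral_const_mul' _ _ ENNReal.ofReal_ne_top,
    hIA, hIB, ← mul_add, ← two_mul, ← mul_assoc, ← mul_assoc,
    show ((2:ℝ≥0∞)) = ENNReal.ofReal 2 by norm_num, ← ENNReal.ofReal_mul (by norm_num),
    ← hC0]
  norm_num

private lemma exp_int {c : ℝ} (hc : 0 < c) :
    ∫ s in Ioi (0:ℝ), Real.exp (-(c * s)) = c⁻¹ := by
  have h := integral_comp_mul_left_Ioi (fun y => Real.exp (-y)) 0 hc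
  simp only [mul_zero] at h
  rw [integral_exp_neg_Ioi] at h
  simpa using h

private lemma exp_integrable {c : ℝ} (hc : 0 < c) :
    IntegrableOn (fun s : ℝ => Real.exp (-(c * s))) (Ioi (0:ℝ)) := by
  have := exp_neg_integrableOn_Ioi 0 hc
  simpa [neg_mul] using this

private lemma lint_exp {c : ℝ} (hc : 0 < c) :
    ∫⁻ s in Ioi (0:ℝ), ENNReal.ofReal (Real.exp (-(c * s))) = ENNReal.ofReal c⁻¹ := by
  rw [← ofReal_integral_eq_lintegral_ofReal (exp_integrable hc)
    (ae_of_all _ fun s => (Real.exp_pos _).le), exp_int hc]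

private lemma pos_part {α β : ℝ} (hα : 0 < α) (hβ : 0 < β) {g : ℝ → ℝ} (hg : Measurable g)
    (hfin : ∫⁻ p in Ioi (0:ℝ) ×ˢ Ioi (0:ℝ),
        ENNReal.ofReal (|g p.1| * |g p.2| * ((p.1 ^ α + p.2 ^ α) * p.1 ^ β * p.2 ^ β)⁻¹) ≠ ⊤) :
    0 ≤ ∫ p in Ioi (0:ℝ) ×ˢ Ioi (0:ℝ),
        g p.1 * g p.2 / ((p.1 ^ α + p.2 ^ α) * p.1 ^ β * p.2 ^ β) := by
  have hprod : volume.restrict (Ioi (0:ℝ) ×ˢ Ioi (0:ℝ))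
      = (volume.restrict (Ioi (0:ℝ))).prod (volume.restrict (Ioi (0:ℝ))) := by
    rw [Measure.prod_restrict, ← Measure.volume_eq_prod]
  obtain ⟨Φ, hΦ⟩ : ∃ Φ : (ℝ × ℝ) × ℝ → ℝ, Φ = fun q =>
      (g q.1.1 * q.1.1 ^ (-β) * Real.exp (-(q.1.1 ^ α * q.2))) *
      (g q.1.2 * q.1.2 ^ (-β) * Real.exp (-(q.1.2 ^ α * q.2))) := ⟨_, rfl⟩
  have hΦm : Measurable Φ := by rw [hΦ]; fun_prop
  have hcpos : ∀ {x y : ℝ}, 0 < x → 0 < y → 0 < x ^ α + y ^ α := fun hx hy =>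
    add_pos (Real.rpow_pos_of_pos hx α) (Real.rpow_pos_of_pos hy α)
  have halg : ∀ {x y : ℝ}, 0 < x → 0 < y →
      x ^ (-β) * y ^ (-β) * (x ^ α + y ^ α)⁻¹ = ((x ^ α + y ^ α) * x ^ β * y ^ β)⁻¹ := by
    intro x y hx hy
    rw [Real.rpow_neg hx.le, Real.rpow_neg hy.le, mul_inv, mul_inv]
    ring
  -- rearrangement of Φ for fixed p
  have hre : ∀ (p : ℝ × ℝ) (s : ℝ), Φ (p, s)
      = (g p.1 * g p.2 * (p.1 ^ (-β) * p.2 ^ (-β)))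
        * Real.exp (-((p.1 ^ α + p.2 ^ α) * s)) := by
    intro p s
    rw [hΦ]
    show (g p.1 * p.1 ^ (-β) * Real.exp (-(p.1 ^ α * s))) *
      (g p.2 * p.2 ^ (-β) * Real.exp (-(p.2 ^ α * s))) = _
    rw [show (g p.1 * p.1 ^ (-β) * Real.exp (-(p.1 ^ α * s))) *
        (g p.2 * p.2 ^ (-β) * Real.exp (-(p.2 ^ α * s)))
        = (g p.1 * g p.2 * (p.1 ^ (-β) * p.2 ^ (-β)))
          * (Real.exp (-(p.1 ^ α * s)) * Real.exp (-(p.2 ^ α * s))) by ring,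
      ← Real.exp_add]
    congr 1
    ring
  -- finiteness of the triple lintegral
  have hnorm : ∀ᵐ p ∂((volume.restrict (Ioi (0:ℝ))).prod (volume.restrict (Ioi (0:ℝ)))),
      (∫⁻ s in Ioi (0:ℝ), (‖Φ (p, s)‖₊ : ℝ≥0∞))
        = ENNReal.ofReal (|g p.1| * |g p.2| * ((p.1 ^ α + p.2 ^ α) * p.1 ^ β * p.2 ^ β)⁻¹) := by
    rw [← hprod]
    filter_upwards [ae_restrict_mem (measurableSet_Ioi.prod measurableSet_Ioi)] with p hp
    have hx : (0:ℝ) < p.1 := hp.1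
    have hy : (0:ℝ) < p.2 := hp.2
    have habs : ∀ s : ℝ, (‖Φ (p, s)‖₊ : ℝ≥0∞)
        = ENNReal.ofReal ((|g p.1| * |g p.2| * (p.1 ^ (-β) * p.2 ^ (-β)))
          * Real.exp (-((p.1 ^ α + p.2 ^ α) * s))) := by
      intro s
      rw [← enorm_eq_nnnorm, Real.enorm_eq_ofReal_abs, hre p s]
      congr 1
      rw [abs_mul, abs_mul, abs_mul, abs_mul,
        abs_of_pos (Real.exp_pos _), abs_of_pos (Real.rpow_pos_of_pos hx _),
        abs_of_pos (Real.rpow_pos_of_pos hy _)]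
    simp only [habs]
    have hnn : 0 ≤ |g p.1| * |g p.2| * (p.1 ^ (-β) * p.2 ^ (-β)) := by
      have := (Real.rpow_pos_of_pos hx (-β)).le
      have := (Real.rpow_pos_of_pos hy (-β)).le
      positivity
    simp only [ENNReal.ofReal_mul hnn]
    rw [lintegral_const_mul' _ _ ENNReal.ofReal_ne_top, lint_exp (hcpos hx hy),
      ← ENNReal.ofReal_mul hnn, mul_assoc (|g p.1| * |g p.2|), halg hx hy]
  have hint : Integrable Φ
      ((((volume.restrict (Ioi (0:ℝ))).prod (volume.restrict (Ioi (0:ℝ))))).prod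
        (volume.restrict (Ioi (0:ℝ)))) := by
    refine ⟨hΦm.aestronglyMeasurable, ?_⟩
    rw [hasFiniteIntegral_def]
    simp only [enorm_eq_nnnorm]
    rw [MeasureTheory.lintegral_prod _ (by fun_prop : Measurable
      fun q : (ℝ × ℝ) × ℝ => (‖Φ q‖₊ : ℝ≥0∞)).aemeasurable, lintegral_congr_ae hnorm, ← hprod]
    exact hfin.lt_top
  -- the inner s-integral identity
  have hinner : ∀ᵐ p ∂((volume.restrict (Ioi (0:ℝ))).prod (volume.restrict (Ioi (0:ℝ)))),
      g p.1 * g p.2 / ((p.1 ^ α + p.2 ^ α) * p.1 ^ β * p.2 ^ β)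
        = ∫ s in Ioi (0:ℝ), Φ (p, s) := by
    rw [← hprod]
    filter_upwards [ae_restrict_mem (measurableSet_Ioi.prod measurableSet_Ioi)] with p hp
    have hx : (0:ℝ) < p.1 := hp.1
    have hy : (0:ℝ) < p.2 := hp.2
    simp only [hre p]
    rw [MeasureTheory.integral_const_mul, exp_int (hcpos hx hy), div_eq_mul_inv,
      mul_assoc (g p.1 * g p.2), halg hx hy]
  calc (0:ℝ) ≤ ∫ s in Ioi (0:ℝ),
        (∫ x in Ioi (0:ℝ), g x * x ^ (-β) * Real.exp (-(x ^ α * s))) ^ 2 := by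
        refine integral_nonneg fun s => sq_nonneg _
    _ = ∫ s in Ioi (0:ℝ), ∫ p, Φ (p, s)
          ∂((volume.restrict (Ioi (0:ℝ))).prod (volume.restrict (Ioi (0:ℝ)))) := by
        refine integral_congr_ae (ae_of_all _ fun s => ?_)
        show (∫ x in Ioi (0:ℝ), g x * x ^ (-β) * Real.exp (-(x ^ α * s))) ^ 2
          = ∫ p, Φ (p, s) ∂((volume.restrict (Ioi (0:ℝ))).prod (volume.restrict (Ioi (0:ℝ))))
        rw [show (fun p : ℝ × ℝ => Φ (p, s)) = fun p : ℝ × ℝ =>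
            (fun x => g x * x ^ (-β) * Real.exp (-(x ^ α * s))) p.1 *
            (fun x => g x * x ^ (-β) * Real.exp (-(x ^ α * s))) p.2 by rw [hΦ], sq]
        exact (MeasureTheory.integral_prod_mul _ _).symm
    _ = ∫ p, (∫ s in Ioi (0:ℝ), Φ (p, s))
          ∂((volume.restrict (Ioi (0:ℝ))).prod (volume.restrict (Ioi (0:ℝ)))) :=
        (integral_integral_swap (f := fun p s => Φ (p, s)) (by exact hint)).symm
    _ = ∫ p in Ioi (0:ℝ) ×ˢ Ioi (0:ℝ),
          g p.1 * g p.2 / ((p.1 ^ α + p.2 ^ α) * p.1 ^ β * p.2 ^ β) := by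
        rw [hprod]
        exact (integral_congr_ae hinner).symm

/-- A Hardy-type bound: for `α, β > 0` with `α + 2β = 1`, the bilinear
form with kernel `1/((x^α + y^α) x^β y^β)` is nonnegative and bounded on `L²(0,∞)`. -/
theorem hardy_type_bound (α β : ℝ) (hα : 0 < α) (hβ : 0 < β) (hαβ : α + 2 * β = 1) :
    ∃ C > (0:ℝ), ∀ f : ℝ → ℝ, MemLp f 2 (volume.restrict (Set.Ioi (0:ℝ))) →
      IntegrableOn (fun p : ℝ × ℝ =>
          |f p.1| * |f p.2| / ((p.1 ^ α + p.2 ^ α) * p.1 ^ β * p.2 ^ β))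
        (Set.Ioi (0:ℝ) ×ˢ Set.Ioi (0:ℝ))
      ∧ 0 ≤ (∫ p in Set.Ioi (0:ℝ) ×ˢ Set.Ioi (0:ℝ),
          f p.1 * f p.2 / ((p.1 ^ α + p.2 ^ α) * p.1 ^ β * p.2 ^ β))
      ∧ (∫ p in Set.Ioi (0:ℝ) ×ˢ Set.Ioi (0:ℝ),
          f p.1 * f p.2 / ((p.1 ^ α + p.2 ^ α) * p.1 ^ β * p.2 ^ β))
        ≤ C * ∫ x in Set.Ioi (0:ℝ), (f x) ^ 2 := by
  have hβ' : β < 2⁻¹ := by linarith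
  refine ⟨∫ t in Ioi (0:ℝ), t ^ (-β - 2⁻¹) / (1 + t ^ α), phi_int_pos hα hβ hβ' hαβ, ?_⟩
  intro f hf
  obtain ⟨g, hgm, hfg⟩ : ∃ g : ℝ → ℝ, StronglyMeasurable g
      ∧ f =ᵐ[volume.restrict (Ioi (0:ℝ))] g :=
    ⟨hf.aestronglyMeasurable.mk f, hf.aestronglyMeasurable.stronglyMeasurable_mk,
      hf.aestronglyMeasurable.ae_eq_mk⟩
  have hg : Measurable g := hgm.measurable
  have hgL2 : MemLp g 2 (volume.restrict (Ioi (0:ℝ))) := (memLp_congr_ae hfg).mp hf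
  have hg2int : Integrable (fun x => g x ^ 2) (volume.restrict (Ioi (0:ℝ))) :=
    hgL2.integrable_sq
  have hprod : volume.restrict (Ioi (0:ℝ) ×ˢ Ioi (0:ℝ))
      = (volume.restrict (Ioi (0:ℝ))).prod (volume.restrict (Ioi (0:ℝ))) := by
    rw [Measure.prod_restrict, ← Measure.volume_eq_prod]
  -- a.e. equality of f and g composed with projections
  have h1 : (fun p : ℝ × ℝ => f p.1) =ᵐ[volume.restrict (Ioi (0:ℝ) ×ˢ Ioi (0:ℝ))]
      fun p => g p.1 := by
    rw [hprod]
    exact Measure.quasiMeasurePreserving_fst.ae_eq_comp hfg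
  have h2 : (fun p : ℝ × ℝ => f p.2) =ᵐ[volume.restrict (Ioi (0:ℝ) ×ˢ Ioi (0:ℝ))]
      fun p => g p.2 := by
    rw [hprod]
    exact Measure.quasiMeasurePreserving_snd.ae_eq_comp hfg
  -- the squared integrals agree
  have hsq : ∫ x in Ioi (0:ℝ), f x ^ 2 = ∫ x in Ioi (0:ℝ), g x ^ 2 := by
    refine integral_congr_ae ?_
    filter_upwards [hfg] with x hx
    rw [hx]
  -- the lintegral finiteness via Schur
  have hg2lint : ∫⁻ x in Ioi (0:ℝ), ENNReal.ofReal (g x ^ 2)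
      = ENNReal.ofReal (∫ x in Ioi (0:ℝ), g x ^ 2) :=
    (ofReal_integral_eq_lintegral_ofReal hg2int (ae_of_all _ fun x => sq_nonneg _)).symm
  have hfin : ∫⁻ p in Ioi (0:ℝ) ×ˢ Ioi (0:ℝ),
      ENNReal.ofReal (|g p.1| * |g p.2| * ((p.1 ^ α + p.2 ^ α) * p.1 ^ β * p.2 ^ β)⁻¹)
      ≤ ENNReal.ofReal ((∫ t in Ioi (0:ℝ), t ^ (-β - 2⁻¹) / (1 + t ^ α))
          * ∫ x in Ioi (0:ℝ), g x ^ 2) := by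
    refine le_trans (schur_bound hα hβ hαβ hg) ?_
    rw [hg2lint, ← ENNReal.ofReal_mul (phi_int_pos hα hβ hβ' hαβ).le]
  have hfin' : ∫⁻ p in Ioi (0:ℝ) ×ˢ Ioi (0:ℝ),
      ENNReal.ofReal (|g p.1| * |g p.2| * ((p.1 ^ α + p.2 ^ α) * p.1 ^ β * p.2 ^ β)⁻¹) ≠ ⊤ :=
    (lt_of_le_of_lt hfin ENNReal.ofReal_lt_top).ne
  -- a.e. rewriting of the absolute-value integrand on the product set
  have habs_g : ∀ᵐ p ∂(volume.restrict (Ioi (0:ℝ) ×ˢ Ioi (0:ℝ))),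
      |g p.1| * |g p.2| / ((p.1 ^ α + p.2 ^ α) * p.1 ^ β * p.2 ^ β)
        = |g p.1| * |g p.2| * ((p.1 ^ α + p.2 ^ α) * p.1 ^ β * p.2 ^ β)⁻¹ :=
    ae_of_all _ fun p => div_eq_mul_inv _ _
  -- integrability of the g-version
  have hIg : IntegrableOn (fun p : ℝ × ℝ =>
      |g p.1| * |g p.2| / ((p.1 ^ α + p.2 ^ α) * p.1 ^ β * p.2 ^ β))
      (Ioi (0:ℝ) ×ˢ Ioi (0:ℝ)) := by
    refine ⟨(by fun_prop : Measurable fun p : ℝ × ℝ =>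
      |g p.1| * |g p.2| / ((p.1 ^ α + p.2 ^ α) * p.1 ^ β * p.2 ^ β)).aestronglyMeasurable, ?_⟩
    rw [hasFiniteIntegral_def]
    have : ∀ᵐ p ∂(volume.restrict (Ioi (0:ℝ) ×ˢ Ioi (0:ℝ))),
        (‖|g p.1| * |g p.2| / ((p.1 ^ α + p.2 ^ α) * p.1 ^ β * p.2 ^ β)‖₊ : ℝ≥0∞)
          = ENNReal.ofReal (|g p.1| * |g p.2| * ((p.1 ^ α + p.2 ^ α) * p.1 ^ β * p.2 ^ β)⁻¹) := by
      filter_upwards [ae_restrict_mem (measurableSet_Ioi.prod measurableSet_Ioi)] with p hp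
      have hx : (0:ℝ) < p.1 := hp.1
      have hy : (0:ℝ) < p.2 := hp.2
      rw [← enorm_eq_nnnorm, Real.enorm_eq_ofReal_abs, abs_of_nonneg
        (div_nonneg (mul_nonneg (abs_nonneg _) (abs_nonneg _)) (ker_pos hx hy).le),
        div_eq_mul_inv]
    exact lt_of_le_of_lt (le_of_eq (lintegral_congr_ae this)) (hfin.trans_lt ENNReal.ofReal_lt_top)
  constructor
  · -- integrability of the f-version
    refine hIg.congr ?_
    filter_upwards [h1, h2] with p e1 e2
    rw [e1, e2]
  have hmain : ∫ p in Ioi (0:ℝ) ×ˢ Ioi (0:ℝ),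
      f p.1 * f p.2 / ((p.1 ^ α + p.2 ^ α) * p.1 ^ β * p.2 ^ β)
      = ∫ p in Ioi (0:ℝ) ×ˢ Ioi (0:ℝ),
      g p.1 * g p.2 / ((p.1 ^ α + p.2 ^ α) * p.1 ^ β * p.2 ^ β) := by
    refine integral_congr_ae ?_
    filter_upwards [h1, h2] with p e1 e2
    rw [e1, e2]
  constructor
  · rw [hmain]
    exact pos_part hα hβ hg hfin'
  · rw [hmain, hsq]
    -- signed integral ≤ integral of absolute values ≤ C * ∫ g²
    have hSg : IntegrableOn (fun p : ℝ × ℝ =>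
        g p.1 * g p.2 / ((p.1 ^ α + p.2 ^ α) * p.1 ^ β * p.2 ^ β))
        (Ioi (0:ℝ) ×ˢ Ioi (0:ℝ)) := by
      refine hIg.mono' ((by fun_prop : Measurable fun p : ℝ × ℝ =>
        g p.1 * g p.2 / ((p.1 ^ α + p.2 ^ α) * p.1 ^ β * p.2 ^ β)).aestronglyMeasurable) ?_
      filter_upwards [ae_restrict_mem (measurableSet_Ioi.prod measurableSet_Ioi)] with p hp
      have hx : (0:ℝ) < p.1 := hp.1
      have hy : (0:ℝ) < p.2 := hp.2
      rw [Real.norm_eq_abs, abs_div, abs_mul]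
      gcongr
      exact le_abs_self _
    have step1 : ∫ p in Ioi (0:ℝ) ×ˢ Ioi (0:ℝ),
        g p.1 * g p.2 / ((p.1 ^ α + p.2 ^ α) * p.1 ^ β * p.2 ^ β)
        ≤ ∫ p in Ioi (0:ℝ) ×ˢ Ioi (0:ℝ),
        |g p.1| * |g p.2| / ((p.1 ^ α + p.2 ^ α) * p.1 ^ β * p.2 ^ β) := by
      refine integral_mono_ae hSg hIg ?_
      filter_upwards [ae_restrict_mem (measurableSet_Ioi.prod measurableSet_Ioi)] with p hp
      have hx : (0:ℝ) < p.1 := hp.1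
      have hy : (0:ℝ) < p.2 := hp.2
      refine div_le_div_of_nonneg_right ?_ (ker_pos hx hy).le |>.trans_eq rfl
      calc g p.1 * g p.2 ≤ |g p.1 * g p.2| := le_abs_self _
        _ = |g p.1| * |g p.2| := abs_mul _ _
    refine le_trans step1 ?_
    have step2 : ∫ p in Ioi (0:ℝ) ×ˢ Ioi (0:ℝ),
        |g p.1| * |g p.2| / ((p.1 ^ α + p.2 ^ α) * p.1 ^ β * p.2 ^ β)
        = (∫⁻ p in Ioi (0:ℝ) ×ˢ Ioi (0:ℝ), ENNReal.ofReal
            (|g p.1| * |g p.2| * ((p.1 ^ α + p.2 ^ α) * p.1 ^ β * p.2 ^ β)⁻¹)).toReal := by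
      have hnn : 0 ≤ᵐ[volume.restrict (Ioi (0:ℝ) ×ˢ Ioi (0:ℝ))] fun p : ℝ × ℝ =>
          |g p.1| * |g p.2| / ((p.1 ^ α + p.2 ^ α) * p.1 ^ β * p.2 ^ β) := by
        filter_upwards [ae_restrict_mem (measurableSet_Ioi.prod measurableSet_Ioi)] with p hp
        exact div_nonneg (mul_nonneg (abs_nonneg _) (abs_nonneg _)) (ker_pos hp.1 hp.2).le
      rw [integral_eq_lintegral_of_nonneg_ae hnn hIg.aestronglyMeasurable]
      congr 1
    rw [step2]
    calc (∫⁻ p in Ioi (0:ℝ) ×ˢ Ioi (0:ℝ), ENNReal.ofReal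
            (|g p.1| * |g p.2| * ((p.1 ^ α + p.2 ^ α) * p.1 ^ β * p.2 ^ β)⁻¹)).toReal
        ≤ (ENNReal.ofReal ((∫ t in Ioi (0:ℝ), t ^ (-β - 2⁻¹) / (1 + t ^ α))
            * ∫ x in Ioi (0:ℝ), g x ^ 2)).toReal :=
          ENNReal.toReal_mono ENNReal.ofReal_ne_top hfin
      _ = (∫ t in Ioi (0:ℝ), t ^ (-β - 2⁻¹) / (1 + t ^ α)) * ∫ x in Ioi (0:ℝ), g x ^ 2 := by
          rw [ENNReal.toReal_ofReal]
          exact mul_nonneg (phi_int_pos hα hβ hβ' hαβ).le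
            (integral_nonneg fun x => sq_nonneg _)
end
end

section
/- Let α, β > 0 satisfy α + 2β = 1. Then there exists a constant C > 0 such that for every real square-summable sequence (a_ℓ)_{ℓ≥1}: the double series Σ_{ℓ,ℓ′≥1} a_ℓ·a_{ℓ′} / ((ℓ^α + (ℓ′)^α)·ℓ^β·(ℓ′)^β) converges absolutely, and 0 ≤ Σ_{ℓ,ℓ′≥1} a_ℓ·a_{ℓ′} / ((ℓ^α + (ℓ′)^α)·ℓ^β·(ℓ′)^β) ≤ C·Σ_{ℓ≥1} a_ℓ². -/
open Real Filter

noncomputable section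

-- Lemma A: concavity step
lemma lemA_s12 {t p : ℝ} (ht : 0 ≤ t) (hp0 : 0 < p) (hp1 : p ≤ 1) :
    p * (t+1) ^ (p-1) ≤ (t+1) ^ p - t ^ p := by
  have h1 : (0:ℝ) < t + 1 := by linarith
  have hber : (1 + -(1/(t+1))) ^ p ≤ 1 + p * -(1/(t+1)) := by
    apply rpow_one_add_le_one_add_mul_self _ hp0.le hp1
    have : 1/(t+1) ≤ 1 := by rw [div_le_one h1]; linarith
    linarith
  have he : (1 + -(1/(t+1)) : ℝ) = t/(t+1) := by field_simp; ring
  rw [he] at hber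
  have hd : (t/(t+1)) ^ p = t ^ p / (t+1) ^ p := div_rpow ht h1.le p
  rw [hd] at hber
  have hpos : (0:ℝ) < (t+1) ^ p := rpow_pos_of_pos h1 p
  have h2 : t ^ p ≤ (1 + p * -(1/(t+1))) * (t+1) ^ p := by
    rw [div_le_iff₀ hpos] at hber; linarith
  have h3 : (t+1) ^ (p-1) = (t+1) ^ p / (t+1) := by
    rw [rpow_sub h1, rpow_one]
  rw [h3]
  have h4 : (1 + p * -(1/(t+1))) * (t+1) ^ p = (t+1)^p - p * ((t+1)^p / (t+1)) := by
    field_simp; ring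
  rw [h4] at h2; linarith

-- Lemma B: convexity step
lemma lemB_s12 {t q : ℝ} (ht : 0 < t) (hq : 0 < q) :
    q * (t+1) ^ (-q-1) ≤ t ^ (-q) - (t+1) ^ (-q) := by
  have h1 : (0:ℝ) < t + 1 := by linarith
  have hber : 1 + (q+1) * (1/t) ≤ (1 + 1/t) ^ (q+1) := by
    apply one_add_mul_self_le_rpow_one_add _ (by linarith)
    have : (0:ℝ) ≤ 1/t := by positivity
    linarith
  have he : (1 + 1/t : ℝ) = (t+1)/t := by field_simp
  rw [he, div_rpow h1.le ht.le] at hber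
  have hq1 : (0:ℝ) < (t+1) ^ (q+1) := rpow_pos_of_pos h1 _
  have htq1 : (0:ℝ) < t ^ (q+1) := rpow_pos_of_pos ht _
  have htnq : (0:ℝ) < t ^ (-q) := rpow_pos_of_pos ht _
  have h5 : (1 + (q+1) * (1/t)) * t ^ (q+1) ≤ (t+1) ^ (q+1) :=
    (le_div_iff₀ htq1).mp hber
  have e0 : t ^ (-q) * t ^ (q+1) = t := by
    rw [← rpow_add ht]; norm_num
  have key : t + q + 1 ≤ t ^ (-q) * (t+1) ^ (q+1) := by
    have h6 := mul_le_mul_of_nonneg_left h5 htnq.le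
    have e1 : t ^ (-q) * ((1 + (q+1) * (1/t)) * t ^ (q+1))
        = (1 + (q+1) * (1/t)) * (t ^ (-q) * t ^ (q+1)) := by ring
    rw [e1, e0] at h6
    have e3 : (1 + (q+1) * (1/t)) * t = t + q + 1 := by
      field_simp; ring
    linarith [h6, e3.symm.le]
  have hmain : q ≤ (t ^ (-q) - (t+1) ^ (-q)) * (t+1) ^ (q+1) := by
    have e1 : (t+1) ^ (-q) * (t+1) ^ (q+1) = t + 1 := by
      rw [← rpow_add h1]; norm_num
    nlinarith [key, e1]
  have e2 : (t+1) ^ (-q-1) = ((t+1) ^ (q+1))⁻¹ := by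
    rw [← rpow_neg h1.le]; ring_nf
  rw [e2, ← div_eq_mul_inv, div_le_iff₀ hq1]
  linarith

-- L1: partial sums of n^{-s}, 0<s<1
lemma sumL1 {s : ℝ} (hs0 : 0 < s) (hs1 : s < 1) (N : ℕ) :
    ∑ n ∈ Finset.range N, ((n:ℝ)+1) ^ (-s) ≤ (N:ℝ) ^ (1-s) / (1-s) := by
  have hp0 : 0 < 1 - s := by linarith
  have step : ∀ n : ℕ, ((n:ℝ)+1) ^ (-s)
      ≤ (((n:ℝ)+1) ^ (1-s) - (n:ℝ) ^ (1-s)) / (1-s) := by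
    intro n
    have h := lemA_s12 (t := (n:ℝ)) (p := 1-s) (Nat.cast_nonneg n) hp0 (by linarith)
    rw [le_div_iff₀ hp0]
    have he : (1:ℝ) - s - 1 = -s := by ring
    rw [he] at h
    linarith
  calc ∑ n ∈ Finset.range N, ((n:ℝ)+1) ^ (-s)
      ≤ ∑ n ∈ Finset.range N, ((((n:ℝ)+1) ^ (1-s) - (n:ℝ) ^ (1-s)) / (1-s)) :=
        Finset.sum_le_sum fun n _ => step n
    _ = (∑ n ∈ Finset.range N, ((((n+1:ℕ):ℝ)) ^ (1-s) - ((n:ℕ):ℝ) ^ (1-s))) / (1-s) := by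
        rw [← Finset.sum_div]; congr 1; apply Finset.sum_congr rfl; intro n _; push_cast; ring_nf
    _ = (((N:ℕ):ℝ) ^ (1-s) - ((0:ℕ):ℝ) ^ (1-s)) / (1-s) := by
        rw [Finset.sum_range_sub (fun n => ((n:ℕ):ℝ) ^ (1-s))]
    _ = (N:ℝ) ^ (1-s) / (1-s) := by
        norm_num [Real.zero_rpow (ne_of_gt hp0)]

-- L2: tail sums of n^{-s'}, s'>1
lemma sumL2 {s' : ℝ} (h1 : 1 < s') (c : ℕ) (hc : 1 ≤ c) :
    Summable (fun n : ℕ => ((n:ℝ) + (c:ℝ) + 1) ^ (-s')) ∧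
    ∑' n : ℕ, ((n:ℝ) + (c:ℝ) + 1) ^ (-s') ≤ (c:ℝ) ^ (1-s') / (s'-1) := by
  have hq : 0 < s' - 1 := by linarith
  have hcpos : (0:ℝ) < (c:ℝ) := by exact_mod_cast hc
  have step : ∀ n : ℕ, ((n:ℝ) + (c:ℝ) + 1) ^ (-s')
      ≤ (((n:ℝ)+(c:ℝ)) ^ (-(s'-1)) - ((n:ℝ)+(c:ℝ)+1) ^ (-(s'-1))) / (s'-1) := by
    intro n
    have ht : (0:ℝ) < (n:ℝ) + (c:ℝ) := by positivity
    have h := lemB_s12 (t := (n:ℝ)+(c:ℝ)) (q := s'-1) ht hq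
    rw [le_div_iff₀ hq]
    have he : -(s'-1) - 1 = -s' := by ring
    rw [he] at h
    linarith
  have partial_le : ∀ N : ℕ, ∑ n ∈ Finset.range N, ((n:ℝ) + (c:ℝ) + 1) ^ (-s')
      ≤ (c:ℝ) ^ (1-s') / (s'-1) := by
    intro N
    have hF : ∀ n : ℕ, (0:ℝ) ≤ (((n:ℕ):ℝ)+(c:ℝ)) ^ (-(s'-1)) := by
      intro n; positivity
    calc ∑ n ∈ Finset.range N, ((n:ℝ) + (c:ℝ) + 1) ^ (-s')
        ≤ ∑ n ∈ Finset.range N,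
            ((((n:ℝ)+(c:ℝ)) ^ (-(s'-1)) - ((n:ℝ)+(c:ℝ)+1) ^ (-(s'-1))) / (s'-1)) :=
          Finset.sum_le_sum fun n _ => step n
      _ = (∑ n ∈ Finset.range N, ((((n:ℕ):ℝ)+(c:ℝ)) ^ (-(s'-1))
            - (((n+1:ℕ):ℝ)+(c:ℝ)) ^ (-(s'-1)))) / (s'-1) := by
          rw [← Finset.sum_div]; congr 1; apply Finset.sum_congr rfl; intro n _
          push_cast; ring_nf
      _ = ((((0:ℕ):ℝ)+(c:ℝ)) ^ (-(s'-1)) - (((N:ℕ):ℝ)+(c:ℝ)) ^ (-(s'-1))) / (s'-1) := by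
          rw [Finset.sum_range_sub' (fun n => (((n:ℕ):ℝ)+(c:ℝ)) ^ (-(s'-1)))]
      _ ≤ (c:ℝ) ^ (1-s') / (s'-1) := by
          have e : (((0:ℕ):ℝ)+(c:ℝ)) ^ (-(s'-1)) = (c:ℝ) ^ (1-s') := by
            have h0 : (1:ℝ) - s' = -(s'-1) := by ring
            rw [h0]; norm_num
          rw [← e]
          gcongr
          linarith [hF N]
  have hnn : ∀ n : ℕ, (0:ℝ) ≤ ((n:ℝ) + (c:ℝ) + 1) ^ (-s') := by
    intro n; positivity
  exact ⟨summable_of_sum_range_le hnn partial_le,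
    Real.tsum_le_of_sum_range_le hnn partial_le⟩

noncomputable def gk (α β : ℝ) (m n : ℕ) : ℝ :=
  ((m:ℝ)+1) ^ ((1:ℝ)/2) * ((n:ℝ)+1) ^ (-((1:ℝ)/2)) *
    ((((m:ℝ)+1) ^ α + ((n:ℝ)+1) ^ α) * ((m:ℝ)+1) ^ β * ((n:ℝ)+1) ^ β)⁻¹

lemma g_eq {α β : ℝ} (hαβ : α + 2*β = 1) (m n : ℕ) :
    gk α β m n = ((m:ℝ)+1) ^ (α/2) * ((n:ℝ)+1) ^ (-(1/2+β)) *
      (((m:ℝ)+1) ^ α + ((n:ℝ)+1) ^ α)⁻¹ := by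
  have hx : (0:ℝ) < (m:ℝ)+1 := by positivity
  have hy : (0:ℝ) < (n:ℝ)+1 := by positivity
  have e1 : ((m:ℝ)+1) ^ ((1:ℝ)/2) * ((m:ℝ)+1) ^ (-β) = ((m:ℝ)+1) ^ (α/2) := by
    rw [← rpow_add hx]; congr 1; linarith
  have e2 : ((n:ℝ)+1) ^ (-((1:ℝ)/2)) * ((n:ℝ)+1) ^ (-β) = ((n:ℝ)+1) ^ (-(1/2+β)) := by
    rw [← rpow_add hy]; congr 1; ring
  unfold gk
  rw [mul_inv, mul_inv, ← rpow_neg hx.le, ← rpow_neg hy.le, ← e1, ← e2]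
  ring

lemma gk_nonneg (α β : ℝ) (m n : ℕ) : 0 ≤ gk α β m n := by
  unfold gk
  have hx : (0:ℝ) < (m:ℝ)+1 := by positivity
  have hy : (0:ℝ) < (n:ℝ)+1 := by positivity
  have h1 := rpow_pos_of_pos hx α
  have h2 := rpow_pos_of_pos hy α
  positivity

lemma schur {α β : ℝ} (hα : 0 < α) (hβ : 0 < β) (hαβ : α + 2*β = 1) (m : ℕ) :
    Summable (fun n => gk α β m n) ∧ ∑' n, gk α β m n ≤ 4/α := by
  have hβhalf : β < 1/2 := by linarith
  have hs0 : (0:ℝ) < 1/2 + β := by linarith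
  have hs1 : (1/2 + β : ℝ) < 1 := by linarith
  have hs'1 : (1:ℝ) < 1/2 + β + α := by linarith
  have hx : (0:ℝ) < (m:ℝ)+1 := by positivity
  set x : ℝ := (m:ℝ)+1 with hxdef
  -- bound 1
  have hb1 : ∀ n : ℕ, gk α β m n ≤ x ^ (-(α/2)) * ((n:ℝ)+1) ^ (-(1/2+β)) := by
    intro n
    rw [g_eq hαβ]
    have hy : (0:ℝ) < (n:ℝ)+1 := by positivity
    have hS : (x ^ α + ((n:ℝ)+1) ^ α)⁻¹ ≤ (x ^ α)⁻¹ := by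
      apply inv_anti₀ (rpow_pos_of_pos hx α)
      linarith [rpow_pos_of_pos hy α]
    calc x ^ (α/2) * ((n:ℝ)+1) ^ (-(1/2+β)) * (x ^ α + ((n:ℝ)+1) ^ α)⁻¹
        ≤ x ^ (α/2) * ((n:ℝ)+1) ^ (-(1/2+β)) * (x ^ α)⁻¹ := by
          apply mul_le_mul_of_nonneg_left hS (by positivity)
      _ = (x ^ (α/2) * x ^ (-α)) * ((n:ℝ)+1) ^ (-(1/2+β)) := by
          rw [rpow_neg hx.le α]; ring
      _ = x ^ (-(α/2)) * ((n:ℝ)+1) ^ (-(1/2+β)) := by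
          rw [← rpow_add hx]; congr 2; ring
  -- bound 2 (tail)
  have hb2 : ∀ k : ℕ, gk α β m (k+(m+1))
      ≤ x ^ (α/2) * (((k:ℝ) + ((m+1:ℕ):ℝ) + 1) ^ (-(1/2+β+α))) := by
    intro k
    rw [g_eq hαβ]
    have hyc : ((↑(k+(m+1)):ℝ)+1) = (k:ℝ) + ((m+1:ℕ):ℝ) + 1 := by push_cast; ring
    rw [hyc]
    set y : ℝ := (k:ℝ) + ((m+1:ℕ):ℝ) + 1 with hydef
    have hy : (0:ℝ) < y := by rw [hydef]; positivity
    have hS : (x ^ α + y ^ α)⁻¹ ≤ (y ^ α)⁻¹ := by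
      apply inv_anti₀ (rpow_pos_of_pos hy α)
      linarith [rpow_pos_of_pos hx α]
    calc x ^ (α/2) * y ^ (-(1/2+β)) * (x ^ α + y ^ α)⁻¹
        ≤ x ^ (α/2) * y ^ (-(1/2+β)) * (y ^ α)⁻¹ := by
          apply mul_le_mul_of_nonneg_left hS (by positivity)
      _ = x ^ (α/2) * (y ^ (-(1/2+β)) * y ^ (-α)) := by
          rw [rpow_neg hy.le α]; ring
      _ = x ^ (α/2) * y ^ (-(1/2+β+α)) := by
          rw [← rpow_add hy]; congr 2; ring
  have hmaj := sumL2 (s' := 1/2+β+α) hs'1 (m+1) (by omega)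
  have htail_sum : Summable (fun k => gk α β m (k+(m+1))) :=
    Summable.of_nonneg_of_le (fun k => gk_nonneg α β m _) hb2 (hmaj.1.mul_left (x ^ (α/2)))
  have hsum : Summable (fun n => gk α β m n) := (summable_nat_add_iff (m+1)).mp htail_sum
  refine ⟨hsum, ?_⟩
  have ecast : ((m+1:ℕ):ℝ) = x := by rw [hxdef]; push_cast; ring
  have exx : x ^ (-(α/2)) * x ^ (α/2) = 1 := by
    rw [← rpow_add hx]; norm_num
  have exx'' : x ^ (α/2) * x ^ (-(α/2)) = 1 := by
    rw [← rpow_add hx]; norm_num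
  -- part 1
  have part1 : ∑ n ∈ Finset.range (m+1), gk α β m n ≤ 2/α := by
    calc ∑ n ∈ Finset.range (m+1), gk α β m n
        ≤ ∑ n ∈ Finset.range (m+1), x ^ (-(α/2)) * ((n:ℝ)+1) ^ (-(1/2+β)) :=
          Finset.sum_le_sum fun n _ => hb1 n
      _ = x ^ (-(α/2)) * ∑ n ∈ Finset.range (m+1), ((n:ℝ)+1) ^ (-(1/2+β)) := by
          rw [Finset.mul_sum]
      _ ≤ x ^ (-(α/2)) * (((m+1:ℕ):ℝ) ^ (1-(1/2+β)) / (1-(1/2+β))) := by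
          apply mul_le_mul_of_nonneg_left (sumL1 hs0 hs1 (m+1)) (by positivity)
      _ = 2/α := by
          have e : (1:ℝ) - (1/2+β) = α/2 := by linarith
          rw [e, ecast, mul_div_assoc', exx, one_div_div]
  -- part 2
  have part2 : ∑' k : ℕ, gk α β m (k+(m+1)) ≤ 2/α := by
    calc ∑' k : ℕ, gk α β m (k+(m+1))
        ≤ ∑' k : ℕ, x ^ (α/2) * (((k:ℝ) + ((m+1:ℕ):ℝ) + 1) ^ (-(1/2+β+α))) :=
          Summable.tsum_le_tsum hb2 htail_sum (hmaj.1.mul_left _)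
      _ = x ^ (α/2) * ∑' k : ℕ, ((k:ℝ) + ((m+1:ℕ):ℝ) + 1) ^ (-(1/2+β+α)) := by
          rw [tsum_mul_left]
      _ ≤ x ^ (α/2) * (((m+1:ℕ):ℝ) ^ (1-(1/2+β+α)) / (1/2+β+α-1)) := by
          apply mul_le_mul_of_nonneg_left hmaj.2 (by positivity)
      _ = 2/α := by
          have e : (1:ℝ) - (1/2+β+α) = -(α/2) := by linarith
          have e' : (1/2+β+α-1 : ℝ) = α/2 := by linarith
          rw [e, e', ecast, mul_div_assoc', exx'', one_div_div]
  have hsplit := Summable.sum_add_tsum_nat_add (f := fun n => gk α β m n) (m+1) hsum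
  linarith [hsplit, part1, part2,
    show (2:ℝ)/α + 2/α = 4/α by ring]

lemma finite_psd (X : ℕ → ℝ) (hX : ∀ m, 1 ≤ X m) (c : ℕ → ℝ) (s : Finset ℕ) :
    0 ≤ ∑ m ∈ s, ∑ n ∈ s, c m * c n * (X m + X n)⁻¹ := by
  have hint : ∀ m n : ℕ, IntervalIntegrable
      (fun u : ℝ => c m * c n * u ^ (X m + X n - 1)) MeasureTheory.volume 0 1 :=
    fun m n => (intervalIntegral.intervalIntegrable_rpow'
      (by linarith [hX m, hX n] : (-1:ℝ) < X m + X n - 1)).const_mul _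
  have hkey : ∀ m n : ℕ, c m * c n * (X m + X n)⁻¹
      = ∫ u in (0:ℝ)..1, c m * c n * u ^ (X m + X n - 1) := by
    intro m n
    rw [intervalIntegral.integral_const_mul]
    congr 1
    rw [integral_rpow (Or.inl (by linarith [hX m, hX n] : (-1:ℝ) < X m + X n - 1))]
    rw [Real.one_rpow, Real.zero_rpow (by linarith [hX m, hX n])]
    have e : X m + X n - 1 + 1 = X m + X n := by ring
    rw [e]
    norm_num
  have hsumint : ∀ m : ℕ, IntervalIntegrable
      (fun u : ℝ => ∑ n ∈ s, c m * c n * u ^ (X m + X n - 1)) MeasureTheory.volume 0 1 := by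
    intro m
    have h := IntervalIntegrable.sum (μ := MeasureTheory.volume) (a := (0:ℝ)) (b := 1)
      s (f := fun n u => c m * c n * u ^ (X m + X n - 1)) (fun n _ => hint m n)
    have e : (∑ n ∈ s, fun u : ℝ => c m * c n * u ^ (X m + X n - 1))
        = fun u : ℝ => ∑ n ∈ s, c m * c n * u ^ (X m + X n - 1) := by
      funext u; simp
    rwa [e] at h
  have h2 : ∑ m ∈ s, ∑ n ∈ s, c m * c n * (X m + X n)⁻¹
      = ∫ u in (0:ℝ)..1, ∑ m ∈ s, ∑ n ∈ s, c m * c n * u ^ (X m + X n - 1) := by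
    have inner : ∀ m : ℕ, ∑ n ∈ s, c m * c n * (X m + X n)⁻¹
        = ∫ u in (0:ℝ)..1, ∑ n ∈ s, c m * c n * u ^ (X m + X n - 1) := by
      intro m
      have h := intervalIntegral.integral_finset_sum (μ := MeasureTheory.volume)
        (a := (0:ℝ)) (b := 1) (s := s)
        (f := fun n u => c m * c n * u ^ (X m + X n - 1)) (fun n _ => hint m n)
      rw [h]
      exact Finset.sum_congr rfl fun n _ => hkey m n
    have h := intervalIntegral.integral_finset_sum (μ := MeasureTheory.volume)
      (a := (0:ℝ)) (b := 1) (s := s)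
      (f := fun m u => ∑ n ∈ s, c m * c n * u ^ (X m + X n - 1)) (fun m _ => hsumint m)
    rw [h]
    exact Finset.sum_congr rfl fun m _ => inner m
  rw [h2]
  apply intervalIntegral.integral_nonneg (by norm_num)
  intro u hu
  have hu0 : (0:ℝ) ≤ u := hu.1
  have e : ∑ m ∈ s, ∑ n ∈ s, c m * c n * u ^ (X m + X n - 1)
      = (∑ m ∈ s, c m * u ^ (X m - 2⁻¹)) ^ 2 := by
    rw [sq, Finset.sum_mul_sum]
    apply Finset.sum_congr rfl; intro m _
    apply Finset.sum_congr rfl; intro n _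
    have e2 : X m + X n - 1 = (X m - 2⁻¹) + (X n - 2⁻¹) := by ring
    rw [e2, Real.rpow_add' hu0 (by linarith [hX m, hX n])]
    ring
  rw [e]; exact sq_nonneg _

set_option maxHeartbeats 1000000 in
/-- Discrete Hardy-type bound: for `α, β > 0` with `α + 2β = 1`, the
bilinear form with kernel `1/((ℓ^α + ℓ′^α) ℓ^β ℓ′^β)` is nonnegative and bounded on `ℓ²`. -/
theorem discrete_hardy_type_bound (α β : ℝ) (hα : 0 < α) (hβ : 0 < β)
    (hαβ : α + 2 * β = 1) :
    ∃ C > (0:ℝ), ∀ a : ℕ → ℝ, Summable (fun ℓ : ℕ => (a (ℓ + 1)) ^ 2) →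
      Summable (fun q : ℕ × ℕ =>
          |a (q.1 + 1)| * |a (q.2 + 1)| /
            (((((q.1 : ℝ) + 1)) ^ α + (((q.2 : ℝ) + 1)) ^ α)
              * (((q.1 : ℝ) + 1)) ^ β * (((q.2 : ℝ) + 1)) ^ β))
      ∧ 0 ≤ (∑' q : ℕ × ℕ,
          a (q.1 + 1) * a (q.2 + 1) /
            (((((q.1 : ℝ) + 1)) ^ α + (((q.2 : ℝ) + 1)) ^ α)
              * (((q.1 : ℝ) + 1)) ^ β * (((q.2 : ℝ) + 1)) ^ β))
      ∧ (∑' q : ℕ × ℕ,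
          a (q.1 + 1) * a (q.2 + 1) /
            (((((q.1 : ℝ) + 1)) ^ α + (((q.2 : ℝ) + 1)) ^ α)
              * (((q.1 : ℝ) + 1)) ^ β * (((q.2 : ℝ) + 1)) ^ β))
          ≤ C * ∑' ℓ : ℕ, (a (ℓ + 1)) ^ 2 := by
  refine ⟨4/α, by positivity, ?_⟩
  intro a ha
  have hxpos : ∀ m : ℕ, (0:ℝ) < (m:ℝ)+1 := fun m => by positivity
  have hDpos : ∀ m n : ℕ, (0:ℝ) <
      ((((m:ℝ)+1)) ^ α + (((n:ℝ)+1)) ^ α) * (((m:ℝ)+1)) ^ β * (((n:ℝ)+1)) ^ β := by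
    intro m n
    have h1 := rpow_pos_of_pos (hxpos m) α
    have h2 := rpow_pos_of_pos (hxpos n) α
    have h3 := rpow_pos_of_pos (hxpos m) β
    have h4 := rpow_pos_of_pos (hxpos n) β
    positivity
  have hb2 : Summable (fun m : ℕ => |a (m+1)| ^ 2) := by simpa [sq_abs] using ha
  -- pointwise AM-GM bound
  have hFM : ∀ m n : ℕ,
      |a (m + 1)| * |a (n + 1)| /
        ((((m:ℝ)+1) ^ α + ((n:ℝ)+1) ^ α) * ((m:ℝ)+1) ^ β * ((n:ℝ)+1) ^ β)
      ≤ (1/2) * (|a (m+1)| ^ 2 * gk α β m n + |a (n+1)| ^ 2 * gk α β n m) := by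
    intro m n
    have hx := hxpos m
    have hy := hxpos n
    set t : ℝ := ((m:ℝ)+1) ^ ((1:ℝ)/2) * ((n:ℝ)+1) ^ (-((1:ℝ)/2)) with htdef
    have ht : 0 < t := mul_pos (rpow_pos_of_pos hx _) (rpow_pos_of_pos hy _)
    have hD := hDpos m n
    have hDinv : (0:ℝ) ≤ ((((m:ℝ)+1) ^ α + ((n:ℝ)+1) ^ α) * ((m:ℝ)+1) ^ β * ((n:ℝ)+1) ^ β)⁻¹ :=
      (inv_pos.mpr hD).le
    have amgm : |a (m+1)| * |a (n+1)| ≤ (1/2) * (|a (m+1)| ^ 2 * t + |a (n+1)| ^ 2 * t⁻¹) := by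
      set u : ℝ := t ^ ((1:ℝ)/2) with hudef
      have hu : 0 < u := rpow_pos_of_pos ht _
      have hu2 : u ^ 2 = t := by
        rw [hudef, sq, ← rpow_add ht]; norm_num
      have h := two_mul_le_add_sq (|a (m+1)| * u) (|a (n+1)| / u)
      have e1 : 2 * (|a (m+1)| * u) * (|a (n+1)| / u) = 2 * (|a (m+1)| * |a (n+1)|) := by
        field_simp
      have e2 : (|a (m+1)| * u) ^ 2 = |a (m+1)| ^ 2 * t := by rw [mul_pow, hu2]
      have e3 : (|a (n+1)| / u) ^ 2 = |a (n+1)| ^ 2 * t⁻¹ := by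
        rw [div_pow, hu2, div_eq_mul_inv]
      rw [e1, e2, e3] at h
      linarith
    have et : t⁻¹ = ((n:ℝ)+1) ^ ((1:ℝ)/2) * ((m:ℝ)+1) ^ (-((1:ℝ)/2)) := by
      rw [htdef, mul_inv, ← rpow_neg hx.le, ← rpow_neg hy.le, neg_neg]
      ring
    have egt2 : t * ((((m:ℝ)+1) ^ α + ((n:ℝ)+1) ^ α) * ((m:ℝ)+1) ^ β * ((n:ℝ)+1) ^ β)⁻¹
        = gk α β m n := rfl
    have egt3 : t⁻¹ * ((((m:ℝ)+1) ^ α + ((n:ℝ)+1) ^ α) * ((m:ℝ)+1) ^ β * ((n:ℝ)+1) ^ β)⁻¹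
        = gk α β n m := by
      rw [et, show ((((m:ℝ)+1) ^ α + ((n:ℝ)+1) ^ α) * ((m:ℝ)+1) ^ β * ((n:ℝ)+1) ^ β)
          = ((((n:ℝ)+1) ^ α + ((m:ℝ)+1) ^ α) * ((n:ℝ)+1) ^ β * ((m:ℝ)+1) ^ β) from by ring]
      rfl
    calc |a (m + 1)| * |a (n + 1)| /
        ((((m:ℝ)+1) ^ α + ((n:ℝ)+1) ^ α) * ((m:ℝ)+1) ^ β * ((n:ℝ)+1) ^ β)
        = (|a (m+1)| * |a (n+1)|) *
          ((((m:ℝ)+1) ^ α + ((n:ℝ)+1) ^ α) * ((m:ℝ)+1) ^ β * ((n:ℝ)+1) ^ β)⁻¹ := by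
          rw [div_eq_mul_inv]
      _ ≤ ((1/2) * (|a (m+1)| ^ 2 * t + |a (n+1)| ^ 2 * t⁻¹)) *
          ((((m:ℝ)+1) ^ α + ((n:ℝ)+1) ^ α) * ((m:ℝ)+1) ^ β * ((n:ℝ)+1) ^ β)⁻¹ :=
          mul_le_mul_of_nonneg_right amgm hDinv
      _ = (1/2) * (|a (m+1)| ^ 2 *
            (t * ((((m:ℝ)+1) ^ α + ((n:ℝ)+1) ^ α) * ((m:ℝ)+1) ^ β * ((n:ℝ)+1) ^ β)⁻¹)
          + |a (n+1)| ^ 2 *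
            (t⁻¹ * ((((m:ℝ)+1) ^ α + ((n:ℝ)+1) ^ α) * ((m:ℝ)+1) ^ β * ((n:ℝ)+1) ^ β)⁻¹)) := by
          ring
      _ = (1/2) * (|a (m+1)| ^ 2 * gk α β m n + |a (n+1)| ^ 2 * gk α β n m) := by
          rw [egt2, egt3]
  -- Schur data
  have hgs : ∀ m : ℕ, Summable (fun n => gk α β m n) := fun m => (schur hα hβ hαβ m).1
  have hgle : ∀ m : ℕ, ∑' n, gk α β m n ≤ 4/α := fun m => (schur hα hβ hαβ m).2
  -- summability of the majorant pieces
  have hPnn : ∀ q : ℕ × ℕ, 0 ≤ |a (q.1+1)| ^ 2 * gk α β q.1 q.2 :=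
    fun q => mul_nonneg (sq_nonneg _) (gk_nonneg _ _ _ _)
  have hfib : Summable (fun m : ℕ => |a (m+1)| ^ 2 * ∑' n, gk α β m n) := by
    apply Summable.of_nonneg_of_le
      (fun m => mul_nonneg (sq_nonneg _) (tsum_nonneg (fun n => gk_nonneg _ _ _ _)))
      (fun m => ?_) (hb2.mul_right (4/α))
    exact mul_le_mul_of_nonneg_left (hgle m) (sq_nonneg _)
  have hfibS : ∀ m : ℕ, Summable (fun n : ℕ => |a (m+1)| ^ 2 * gk α β m n) :=
    fun m => Summable.mul_left _ (hgs m)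
  have hP : Summable (fun q : ℕ × ℕ => |a (q.1+1)| ^ 2 * gk α β q.1 q.2) := by
    refine (summable_prod_of_nonneg hPnn).mpr ⟨?_, ?_⟩
    · intro m
      simp only []
      exact Summable.mul_left _ (hgs m)
    simp only []
    have e : ∀ m : ℕ, ∑' n, |a (m+1)| ^ 2 * gk α β m n
        = |a (m+1)| ^ 2 * ∑' n, gk α β m n := fun m => tsum_mul_left
    exact (summable_congr (fun m => (e m))).mpr hfib
  have hPsum : ∑' q : ℕ × ℕ, |a (q.1+1)| ^ 2 * gk α β q.1 q.2 ≤ (4/α) * ∑' m, |a (m+1)| ^ 2 := by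
    rw [show ∑' q : ℕ × ℕ, |a (q.1+1)| ^ 2 * gk α β q.1 q.2
        = ∑' m, ∑' n, |a (m+1)| ^ 2 * gk α β m n from Summable.tsum_prod' hP hfibS]
    calc ∑' m, ∑' n, |a (m+1)| ^ 2 * gk α β m n
        = ∑' m, |a (m+1)| ^ 2 * ∑' n, gk α β m n :=
          tsum_congr fun m => tsum_mul_left
      _ ≤ ∑' m, |a (m+1)| ^ 2 * (4/α) := by
          apply Summable.tsum_le_tsum (fun m => mul_le_mul_of_nonneg_left (hgle m) (sq_nonneg _))
            hfib (hb2.mul_right (4/α))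
      _ = (4/α) * ∑' m, |a (m+1)| ^ 2 := by
          rw [tsum_mul_right]; ring
  have hP' : Summable (fun q : ℕ × ℕ => |a (q.2+1)| ^ 2 * gk α β q.2 q.1) := by
    have h := ((Equiv.prodComm ℕ ℕ).summable_iff
      (f := fun q : ℕ × ℕ => |a (q.1+1)| ^ 2 * gk α β q.1 q.2)).mpr hP
    exact h
  have hP'sum : ∑' q : ℕ × ℕ, |a (q.2+1)| ^ 2 * gk α β q.2 q.1
      = ∑' q : ℕ × ℕ, |a (q.1+1)| ^ 2 * gk α β q.1 q.2 := by
    have h := (Equiv.prodComm ℕ ℕ).tsum_eq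
      (fun q : ℕ × ℕ => |a (q.1+1)| ^ 2 * gk α β q.1 q.2)
    exact h
  have hM : Summable (fun q : ℕ × ℕ =>
      (1/2) * (|a (q.1+1)| ^ 2 * gk α β q.1 q.2 + |a (q.2+1)| ^ 2 * gk α β q.2 q.1)) :=
    (hP.add hP').mul_left _
  have hFnn : ∀ q : ℕ × ℕ, 0 ≤ |a (q.1 + 1)| * |a (q.2 + 1)| /
      (((((q.1 : ℝ) + 1)) ^ α + (((q.2 : ℝ) + 1)) ^ α)
        * (((q.1 : ℝ) + 1)) ^ β * (((q.2 : ℝ) + 1)) ^ β) :=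
    fun q => div_nonneg (mul_nonneg (abs_nonneg _) (abs_nonneg _)) (hDpos q.1 q.2).le
  have hF : Summable (fun q : ℕ × ℕ =>
      |a (q.1 + 1)| * |a (q.2 + 1)| /
        (((((q.1 : ℝ) + 1)) ^ α + (((q.2 : ℝ) + 1)) ^ α)
          * (((q.1 : ℝ) + 1)) ^ β * (((q.2 : ℝ) + 1)) ^ β)) :=
    Summable.of_nonneg_of_le hFnn (fun q => hFM q.1 q.2) hM
  have habs : ∀ q : ℕ × ℕ,
      |a (q.1 + 1) * a (q.2 + 1) /
        (((((q.1 : ℝ) + 1)) ^ α + (((q.2 : ℝ) + 1)) ^ α)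
          * (((q.1 : ℝ) + 1)) ^ β * (((q.2 : ℝ) + 1)) ^ β)|
      = |a (q.1 + 1)| * |a (q.2 + 1)| /
        (((((q.1 : ℝ) + 1)) ^ α + (((q.2 : ℝ) + 1)) ^ α)
          * (((q.1 : ℝ) + 1)) ^ β * (((q.2 : ℝ) + 1)) ^ β) := by
    intro q
    rw [abs_div, abs_mul, abs_of_pos (hDpos q.1 q.2)]
  have hf : Summable (fun q : ℕ × ℕ =>
      a (q.1 + 1) * a (q.2 + 1) /
        (((((q.1 : ℝ) + 1)) ^ α + (((q.2 : ℝ) + 1)) ^ α)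
          * (((q.1 : ℝ) + 1)) ^ β * (((q.2 : ℝ) + 1)) ^ β)) := by
    apply Summable.of_abs
    exact (summable_congr habs).mpr hF
  refine ⟨hF, ?_, ?_⟩
  · -- nonnegativity via positive semidefiniteness
    have hXf : ∀ m : ℕ, 1 ≤ ((m:ℝ)+1) ^ α :=
      fun m => Real.one_le_rpow (by linarith [Nat.cast_nonneg (α := ℝ) m]) hα.le
    have hfc : ∀ m n : ℕ,
        a (m + 1) * a (n + 1) /
          ((((m:ℝ)+1) ^ α + ((n:ℝ)+1) ^ α) * ((m:ℝ)+1) ^ β * ((n:ℝ)+1) ^ β)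
        = (a (m+1) * (((m:ℝ)+1) ^ β)⁻¹) * (a (n+1) * (((n:ℝ)+1) ^ β)⁻¹)
          * (((m:ℝ)+1) ^ α + ((n:ℝ)+1) ^ α)⁻¹ := by
      intro m n
      rw [div_eq_mul_inv, mul_inv, mul_inv]
      ring
    have hmono : Monotone (fun N => Finset.range N ×ˢ Finset.range N) := fun i j hij =>
      Finset.product_subset_product (Finset.range_subset_range.mpr hij) (Finset.range_subset_range.mpr hij)
    have hcov : ∀ q : ℕ × ℕ, ∃ N, q ∈ Finset.range N ×ˢ Finset.range N := by
      intro q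
      exact ⟨q.1 + q.2 + 1, Finset.mem_product.mpr
        ⟨Finset.mem_range.mpr (by omega), Finset.mem_range.mpr (by omega)⟩⟩
    have hten : Tendsto (fun N => Finset.range N ×ˢ Finset.range N) atTop atTop :=
      tendsto_atTop_finset_of_monotone hmono hcov
    have hlim := (hf.hasSum.comp hten)
    apply ge_of_tendsto' hlim
    intro N
    simp only [Function.comp]
    rw [Finset.sum_product]
    rw [show (∑ m ∈ Finset.range N, ∑ n ∈ Finset.range N,
          a (m + 1) * a (n + 1) /
            ((((m:ℝ)+1) ^ α + ((n:ℝ)+1) ^ α) * ((m:ℝ)+1) ^ β * ((n:ℝ)+1) ^ β))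
        = ∑ m ∈ Finset.range N, ∑ n ∈ Finset.range N,
          (a (m+1) * (((m:ℝ)+1) ^ β)⁻¹) * (a (n+1) * (((n:ℝ)+1) ^ β)⁻¹)
            * (((m:ℝ)+1) ^ α + ((n:ℝ)+1) ^ α)⁻¹ from
      Finset.sum_congr rfl fun m _ => Finset.sum_congr rfl fun n _ => hfc m n]
    exact finite_psd (fun m => ((m:ℝ)+1) ^ α) hXf (fun m => a (m+1) * (((m:ℝ)+1) ^ β)⁻¹)
      (Finset.range N)
  · -- the upper bound
    calc ∑' q : ℕ × ℕ, a (q.1 + 1) * a (q.2 + 1) /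
          (((((q.1 : ℝ) + 1)) ^ α + (((q.2 : ℝ) + 1)) ^ α)
            * (((q.1 : ℝ) + 1)) ^ β * (((q.2 : ℝ) + 1)) ^ β)
        ≤ ∑' q : ℕ × ℕ, |a (q.1 + 1)| * |a (q.2 + 1)| /
          (((((q.1 : ℝ) + 1)) ^ α + (((q.2 : ℝ) + 1)) ^ α)
            * (((q.1 : ℝ) + 1)) ^ β * (((q.2 : ℝ) + 1)) ^ β) :=
          Summable.tsum_le_tsum (fun q => (le_abs_self _).trans (habs q).le) hf hF
      _ ≤ ∑' q : ℕ × ℕ,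
            (1/2) * (|a (q.1+1)| ^ 2 * gk α β q.1 q.2 + |a (q.2+1)| ^ 2 * gk α β q.2 q.1) :=
          Summable.tsum_le_tsum (fun q => hFM q.1 q.2) hF hM
      _ = (1/2) * ((∑' q : ℕ × ℕ, |a (q.1+1)| ^ 2 * gk α β q.1 q.2)
            + ∑' q : ℕ × ℕ, |a (q.2+1)| ^ 2 * gk α β q.2 q.1) := by
          rw [tsum_mul_left, Summable.tsum_add hP hP']
      _ = ∑' q : ℕ × ℕ, |a (q.1+1)| ^ 2 * gk α β q.1 q.2 := by
          rw [hP'sum]; ring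
      _ ≤ (4/α) * ∑' m, |a (m+1)| ^ 2 := hPsum
      _ = (4/α) * ∑' ℓ, (a (ℓ+1)) ^ 2 := by
          congr 1
          exact tsum_congr fun ℓ => sq_abs _
end
end

section
/- Let n ≥ 0 be an integer, let a_0, …, a_n be real numbers, and let ℓ ∈ ℤ be not divisible by 2(n+1) (so that sin(πk_ℓ/2) ≠ 0, where k_ℓ = ℓ/(n+1)). Then 2·Σ_{y=0}^n a_y·cos(πℓ u_y) = a_0 + (−1)^{ℓ+1}·a_n − Σ_{y=1}^n [ sin(πk_ℓ(y − 1/2)) / sin(πk_ℓ/2) ]·(a_y − a_{y−1}), where u_y = y/(n+1). -/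
open Real

noncomputable section

/-- Abel-type summation formula for cosine sums on the half-integer
grid: for `ℓ` not divisible by `2(n+1)`,
`2 ∑_{y=0}^n a_y cos(πℓ u_y) = a_0 + (−1)^{ℓ+1} a_n
  − ∑_{y=1}^n [sin(πk_ℓ(y−1/2))/sin(πk_ℓ/2)] (a_y − a_{y−1})`. -/
theorem cosine_sum_by_parts (n : ℕ) (a : ℕ → ℝ) (ℓ : ℤ)
    (hℓ : ¬ ((2 * ((n : ℤ) + 1)) ∣ ℓ)) :
    2 * ∑ y ∈ Finset.range (n + 1),
        a y * Real.cos (Real.pi * (ℓ : ℝ) * ((y : ℝ) / ((n : ℝ) + 1)))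
      = a 0 + (-1 : ℝ) ^ (ℓ + 1) * a n
        - ∑ y ∈ Finset.Icc 1 n,
            (Real.sin (Real.pi * ((ℓ : ℝ) / ((n : ℝ) + 1)) * ((y : ℝ) - 1/2))
              / Real.sin (Real.pi * ((ℓ : ℝ) / ((n : ℝ) + 1)) / 2))
              * (a y - a (y - 1)) := by
  have hn : ((n : ℝ) + 1) ≠ 0 := by positivity
  set k : ℝ := (ℓ : ℝ) / ((n : ℝ) + 1) with hk
  set s : ℝ := Real.sin (Real.pi * k / 2) with hsdef
  have hs : s ≠ 0 := by
    intro h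
    rw [hsdef, Real.sin_eq_zero_iff] at h
    obtain ⟨m, hm⟩ := h
    apply hℓ
    refine ⟨m, ?_⟩
    have hm' : (m : ℝ) * Real.pi * (2 * ((n : ℝ) + 1)) = Real.pi * (ℓ : ℝ) := by
      rw [hk] at hm
      field_simp at hm
      rw [← hm]; ring
    have : Real.pi * (ℓ : ℝ) = Real.pi * (2 * ((n : ℝ) + 1) * m) := by linarith
    have h2 := mul_left_cancel₀ Real.pi_ne_zero this
    exact_mod_cast h2
  set T : ℕ → ℝ := fun y => Real.sin (Real.pi * k * ((y : ℝ) - 1/2)) with hT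
  have key : ∀ y : ℕ,
      2 * (a y * Real.cos (Real.pi * (ℓ : ℝ) * ((y : ℝ) / ((n : ℝ) + 1)))) * s
        = a y * (T (y + 1) - T y) := by
    intro y
    have harg : Real.pi * (ℓ : ℝ) * ((y : ℝ) / ((n : ℝ) + 1)) = Real.pi * k * y := by
      rw [hk]; ring
    have hd := Real.sin_sub_sin (Real.pi * k * (((y : ℕ) + 1 : ℕ) - 1/2 : ℝ))
      (Real.pi * k * ((y : ℝ) - 1/2))
    have e1 : ((Real.pi * k * (((y : ℕ) + 1 : ℕ) - 1/2 : ℝ))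
        - Real.pi * k * ((y : ℝ) - 1/2)) / 2 = Real.pi * k / 2 := by push_cast; ring
    have e2 : ((Real.pi * k * (((y : ℕ) + 1 : ℕ) - 1/2 : ℝ))
        + Real.pi * k * ((y : ℝ) - 1/2)) / 2 = Real.pi * k * y := by push_cast; ring
    rw [e1, e2] at hd
    have hTd : T (y + 1) - T y = 2 * s * Real.cos (Real.pi * k * y) := by
      rw [hT]; simp only
      push_cast
      push_cast at hd
      rw [hd, hsdef]
    rw [hTd, harg]; ring
  have hT0 : T 0 = -s := by
    rw [hT]; simp only
    have : Real.pi * k * (((0:ℕ) : ℝ) - 1/2) = -(Real.pi * k / 2) := by push_cast; ring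
    rw [this, Real.sin_neg, hsdef]
  have hTn : T (n + 1) = (-1 : ℝ) ^ (ℓ + 1) * s := by
    rw [hT]; simp only
    have : Real.pi * k * (((n + 1 : ℕ) : ℝ) - 1/2) = (ℓ : ℝ) * Real.pi - Real.pi * k / 2 := by
      rw [hk]; push_cast; field_simp
    rw [this, Real.sin_int_mul_pi_sub, hsdef.symm]
    rw [zpow_add₀ (by norm_num : (-1:ℝ) ≠ 0)]
    ring
  refine mul_right_cancel₀ hs ?_
  have hL : (2 * ∑ y ∈ Finset.range (n + 1),
      a y * Real.cos (Real.pi * (ℓ : ℝ) * ((y : ℝ) / ((n : ℝ) + 1)))) * s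
      = ∑ y ∈ Finset.range (n + 1), a y * (T (y + 1) - T y) := by
    rw [Finset.mul_sum, Finset.sum_mul]
    exact Finset.sum_congr rfl fun y _ => key y
  rw [hL]
  have hIcc : (∑ y ∈ Finset.Icc 1 n, (T y / s) * (a y - a (y - 1))) * s
      = ∑ y ∈ Finset.range n, (a (y + 1) - a y) * T (y + 1) := by
    rw [Finset.sum_mul]
    rw [show Finset.Icc 1 n = Finset.Ico 1 (n + 1) by rw [Finset.Ico_add_one_right_eq_Icc]]
    rw [Finset.sum_Ico_eq_sum_range]
    simp only [Nat.add_sub_cancel]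
    refine Finset.sum_congr rfl fun y _ => ?_
    have h1 : 1 + y - 1 = y := by omega
    have h2 : 1 + y = y + 1 := by omega
    rw [h1, h2]
    field_simp
  have expand : ∑ y ∈ Finset.range (n + 1), a y * (T (y + 1) - T y)
      = a n * T (n + 1) - a 0 * T 0 - ∑ y ∈ Finset.range n, (a (y + 1) - a y) * T (y + 1) := by
    simp only [mul_sub]
    rw [Finset.sum_sub_distrib]
    rw [Finset.sum_range_succ (fun y => a y * T (y + 1)) n]
    rw [Finset.sum_range_succ' (fun y => a y * T y) n]
    have : ∑ y ∈ Finset.range n, (a (y + 1) - a y) * T (y + 1)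
        = ∑ y ∈ Finset.range n, a (y + 1) * T (y + 1)
          - ∑ y ∈ Finset.range n, a y * T (y + 1) := by
      rw [← Finset.sum_sub_distrib]
      exact Finset.sum_congr rfl fun y _ => by ring
    rw [this]
    ring
  rw [expand, hT0, hTn]
  rw [sub_mul, add_mul]
  rw [hIcc]
  ring
end
end
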